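/- arXiv:2011.04363 — 4 statements merged into one kernel-verified Lean document; each statement's English description precedes it below -/
import Mathlib

section
/- If f : F → f(F) ⊆ ℝᵐ is a bi-Lipschitz bijection of a bounded set F ⊆ ℝⁿ, then for all θ ∈ [0,1] the lower θ-intermediate dimensions of F and f(F) agree, and the upper θ-intermediate dimensions of F and f(F) agree. -/
open Set Metric MeasureTheory ENNReal

/-- A cover of `F` witnessing the `θ`-intermediate dimension sum condition at scale `δ`:
a countable cover by sets of diameter between `δ^(1/θ)` and `δ` whose `s`-power diameter
sum is at most `ε`.  (When `θ = 0` the lower bound on diameters is vacuous, recovering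
the Hausdorff dimension condition.) -/
def interCoverSum {X : Type*} [PseudoMetricSpace X]
    (θ δ s ε : ℝ) (F : Set X) : Prop :=
  ∃ 𝒰 : Set (Set X), 𝒰.Countable ∧ F ⊆ ⋃₀ 𝒰 ∧
    (∀ U ∈ 𝒰, EMetric.diam U ≤ ENNReal.ofReal δ ∧
      (θ ≠ 0 → ENNReal.ofReal (δ ^ (1 / θ)) ≤ EMetric.diam U)) ∧
    ∑' U : 𝒰, EMetric.diam (U : Set X) ^ s ≤ ENNReal.ofReal ε

/-- The lower `θ`-intermediate dimension of `F`. -/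
noncomputable def lowerInterDim {X : Type*} [PseudoMetricSpace X] (θ : ℝ) (F : Set X) : ℝ :=
  sInf {s : ℝ | 0 ≤ s ∧ ∀ ε > 0, ∀ δ₀ > 0, ∃ δ, 0 < δ ∧ δ ≤ δ₀ ∧ interCoverSum θ δ s ε F}

/-- The upper `θ`-intermediate dimension of `F`. -/
noncomputable def upperInterDim {X : Type*} [PseudoMetricSpace X] (θ : ℝ) (F : Set X) : ℝ :=
  sInf {s : ℝ | 0 ≤ s ∧ ∀ ε > 0, ∃ δ₀ > 0, ∀ δ, 0 < δ → δ ≤ δ₀ → interCoverSum θ δ s ε F}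

/-- Lower box-counting dimension: the `θ = 1` lower intermediate dimension, i.e. covers
by sets all of the same diameter. -/
noncomputable def lowerBoxDim {X : Type*} [PseudoMetricSpace X] (F : Set X) : ℝ :=
  lowerInterDim 1 F

/-- Upper box-counting dimension: the `θ = 1` upper intermediate dimension. -/
noncomputable def upperBoxDim {X : Type*} [PseudoMetricSpace X] (F : Set X) : ℝ :=
  upperInterDim 1 F

lemma myDiamBall {Y : Type*} [PseudoMetricSpace Y] {A : Set Y} {z : Y} {r : ℝ}
    (h : A ⊆ Metric.closedBall z r) : EMetric.diam A ≤ ENNReal.ofReal (2*r) := by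
  refine EMetric.diam_le fun a ha b hb => ?_
  rw [edist_dist]
  refine ENNReal.ofReal_le_ofReal ?_
  calc dist a b ≤ dist a z + dist z b := dist_triangle _ _ _
  _ ≤ r + r := by
      have h1 := h ha; have h2 := h hb
      rw [Metric.mem_closedBall] at h1 h2
      rw [dist_comm z b]; linarith
  _ = 2*r := by ring

lemma myBallLower {Y : Type*} [NormedAddCommGroup Y] [NormedSpace ℝ Y] [Nontrivial Y]
    {z : Y} {r : ℝ} (hr : 0 ≤ r) :
    ENNReal.ofReal (2*r) ≤ EMetric.diam (Metric.closedBall z r) := by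
  obtain ⟨v, hv⟩ := exists_norm_eq Y (zero_le_one (α := ℝ))
  have hpmem : z + r • v ∈ Metric.closedBall z r := by
    rw [Metric.mem_closedBall, dist_eq_norm]
    simp [norm_smul, hv, abs_of_nonneg hr]
  have hqmem : z - r • v ∈ Metric.closedBall z r := by
    rw [Metric.mem_closedBall, dist_eq_norm]
    simp [norm_smul, hv, abs_of_nonneg hr]
  have hdistpq : dist (z + r • v) (z - r • v) = 2 * r := by
    rw [dist_eq_norm, show (z + r • v) - (z - r • v) = (2*r) • v by module,
      norm_smul, hv, mul_one, Real.norm_eq_abs, abs_of_nonneg (by linarith)]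
  calc ENNReal.ofReal (2*r) = edist (z + r • v) (z - r • v) := by rw [edist_dist, hdistpq]
  _ ≤ EMetric.diam (Metric.closedBall z r) := EMetric.edist_le_diam_of_mem hpmem hqmem

lemma transferICS {X Y : Type*} [PseudoMetricSpace X] [NormedAddCommGroup Y] [NormedSpace ℝ Y]
    [Nontrivial Y] {θ b s : ℝ} (hθ0 : 0 ≤ θ) (hθ1 : θ ≤ 1) (hb : 0 ≤ b) (hs : 0 ≤ s)
    {F : Set X} {g : X → Y}
    (hg : ∀ x ∈ F, ∀ y ∈ F, dist (g x) (g y) ≤ b * dist x y)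
    {δ ε : ℝ} (hδ : 0 < δ) (hδ1 : (2*b+2) * δ ≤ 1)
    (h : interCoverSum θ δ s ε F) :
    interCoverSum θ ((2*b+2)*δ) s ((b + (2*b+2) ^ (1/θ) + 1) ^ s * ε) (g '' F) := by
  obtain ⟨𝒰, hcount, hcover, hdiam, hsum⟩ := h
  set K : ℝ := 2*b+2 with hK
  have hK0 : (0:ℝ) < K := by rw [hK]; linarith
  set δ' : ℝ := K * δ with hδ'
  have hδ'0 : 0 < δ' := by positivity
  have hδ'1 : δ' ≤ 1 := hδ1
  set C : ℝ := b + K ^ (1/θ) + 1 with hC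
  have hKp : (0:ℝ) < K ^ (1/θ) := Real.rpow_pos_of_pos hK0 _
  have hC0 : (0:ℝ) < C := by rw [hC]; linarith
  have hθinv : θ ≠ 0 → 1 ≤ 1/θ := fun hθ =>
    one_le_one_div (lt_of_le_of_ne hθ0 (Ne.symm hθ)) hθ1
  have hrpow : θ ≠ 0 → δ' ^ (1/θ) ≤ δ' := fun hθ => by
    calc δ' ^ (1/θ) ≤ δ' ^ (1:ℝ) :=
      Real.rpow_le_rpow_of_exponent_ge hδ'0 hδ'1 (hθinv hθ)
    _ = δ' := Real.rpow_one _
  set ρ : ℝ := if θ = 0 then 0 else δ' ^ (1/θ) / 2 with hρ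
  have hρ0 : 0 ≤ ρ := by
    rw [hρ]; split
    · exact le_refl 0
    · positivity
  have hρδ' : 2 * ρ ≤ δ' := by
    rw [hρ]; split
    · linarith
    · rename_i hθ; have := hrpow hθ; linarith
  classical
  set V : Set X → Set Y := fun U =>
    if h : (U ∩ F).Nonempty then g '' (U ∩ F) ∪ Metric.closedBall (g h.choose) ρ else ∅
    with hV
  set 𝒰' : Set (Set X) := {U ∈ 𝒰 | (U ∩ F).Nonempty} with h𝒰'
  have hdistδ : ∀ U ∈ 𝒰, ∀ u ∈ U, ∀ u' ∈ U, dist u u' ≤ δ := by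
    intro U hU u hu u' hu'
    have h1 : edist u u' ≤ ENNReal.ofReal δ :=
      (EMetric.edist_le_diam_of_mem hu hu').trans (hdiam U hU).1
    rw [edist_dist] at h1
    exact (ENNReal.ofReal_le_ofReal_iff hδ.le).1 h1
  have key : ∀ U ∈ 𝒰', (EMetric.diam (V U) ≤ ENNReal.ofReal δ' ∧
      (θ ≠ 0 → ENNReal.ofReal (δ' ^ (1/θ)) ≤ EMetric.diam (V U))) ∧
      EMetric.diam (V U) ≤ ENNReal.ofReal C * EMetric.diam U := by
    rintro U ⟨hU, hne⟩
    have hVU : V U = g '' (U ∩ F) ∪ Metric.closedBall (g hne.choose) ρ := by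
      rw [hV]; exact dif_pos hne
    have hx₀ : hne.choose ∈ U ∩ F := hne.choose_spec
    set y₀ := g hne.choose with hy₀
    have himg_ball : g '' (U ∩ F) ⊆ Metric.closedBall y₀ (b*δ) := by
      rintro _ ⟨u, hu, rfl⟩
      rw [Metric.mem_closedBall]
      calc dist (g u) y₀ ≤ b * dist u hne.choose := hg u hu.2 _ hx₀.2
      _ ≤ b * δ := mul_le_mul_of_nonneg_left (hdistδ U hU u hu.1 _ hx₀.1) hb
    have hy₀img : y₀ ∈ g '' (U ∩ F) := ⟨hne.choose, hx₀, rfl⟩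
    have hsub : V U ⊆ Metric.closedBall y₀ (δ'/2) := by
      rw [hVU]
      apply Set.union_subset
      · exact himg_ball.trans (Metric.closedBall_subset_closedBall (by
          rw [hδ', hK]; nlinarith))
      · exact Metric.closedBall_subset_closedBall (by linarith)
    have hupper : EMetric.diam (V U) ≤ ENNReal.ofReal δ' := by
      have := myDiamBall hsub
      rwa [show 2*(δ'/2) = δ' by ring] at this
    have himgdiam : EMetric.diam (g '' (U ∩ F)) ≤ ENNReal.ofReal b * EMetric.diam U := by
      refine EMetric.diam_le ?_
      rintro _ ⟨u, hu, rfl⟩ _ ⟨u', hu', rfl⟩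
      calc edist (g u) (g u') = ENNReal.ofReal (dist (g u) (g u')) := edist_dist _ _
      _ ≤ ENNReal.ofReal (b * dist u u') := ENNReal.ofReal_le_ofReal (hg u hu.2 u' hu'.2)
      _ = ENNReal.ofReal b * ENNReal.ofReal (dist u u') := ENNReal.ofReal_mul hb
      _ = ENNReal.ofReal b * edist u u' := by rw [edist_dist]
      _ ≤ ENNReal.ofReal b * EMetric.diam U :=
        mul_le_mul_right (EMetric.edist_le_diam_of_mem hu.1 hu'.1) _
    constructor
    · refine ⟨hupper, fun hθ => ?_⟩
      have hρθ : ρ = δ' ^ (1/θ) / 2 := by rw [hρ, if_neg hθ]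
      have hblower := myBallLower (z := y₀) hρ0
      calc ENNReal.ofReal (δ' ^ (1/θ)) = ENNReal.ofReal (2 * ρ) := by rw [hρθ]; ring_nf
      _ ≤ EMetric.diam (Metric.closedBall y₀ ρ) := hblower
      _ ≤ EMetric.diam (V U) := EMetric.diam_mono (by rw [hVU]; exact Set.subset_union_right)
    · by_cases hθ : θ = 0
      · have hρz : ρ = 0 := by rw [hρ, if_pos hθ]
        have : V U = g '' (U ∩ F) := by
          rw [hVU, hρz, Metric.closedBall_zero]
          exact Set.union_eq_self_of_subset_right (Set.singleton_subset_iff.2 hy₀img)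
        rw [this]
        refine himgdiam.trans (mul_le_mul_left (ENNReal.ofReal_le_ofReal ?_) _)
        rw [hC]; linarith
      · have hρθ : ρ = δ' ^ (1/θ) / 2 := by rw [hρ, if_neg hθ]
        have hballdiam : EMetric.diam (Metric.closedBall y₀ ρ) ≤
            ENNReal.ofReal (K ^ (1/θ)) * EMetric.diam U := by
          refine (myDiamBall Set.Subset.rfl).trans ?_
          have h2ρ : 2 * ρ = K ^ (1/θ) * δ ^ (1/θ) := by
            rw [hρθ, hδ']
            rw [show 2 * (((K*δ)) ^ (1/θ) / 2) = (K*δ) ^ (1/θ) by ring]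
            exact Real.mul_rpow hK0.le hδ.le
          rw [h2ρ, ENNReal.ofReal_mul (by positivity)]
          exact mul_le_mul_right ((hdiam U hU).2 hθ) _
        calc EMetric.diam (V U) ≤ EMetric.diam (g '' (U ∩ F)) +
            EMetric.diam (Metric.closedBall y₀ ρ) := by
              rw [hVU]
              exact EMetric.diam_union' ⟨y₀, hy₀img, Metric.mem_closedBall_self hρ0⟩
        _ ≤ ENNReal.ofReal b * EMetric.diam U + ENNReal.ofReal (K ^ (1/θ)) * EMetric.diam U :=
            add_le_add himgdiam hballdiam
        _ = (ENNReal.ofReal b + ENNReal.ofReal (K ^ (1/θ))) * EMetric.diam U := by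
            rw [add_mul]
        _ ≤ ENNReal.ofReal C * EMetric.diam U := by
            refine mul_le_mul_left ?_ _
            rw [← ENNReal.ofReal_add hb hKp.le]
            exact ENNReal.ofReal_le_ofReal (by rw [hC]; linarith)
  refine ⟨V '' 𝒰', (hcount.mono (sep_subset _ _)).image V, ?_, ?_, ?_⟩
  · rintro _ ⟨x, hx, rfl⟩
    obtain ⟨U, hU, hxU⟩ := hcover hx
    have hne : (U ∩ F).Nonempty := ⟨x, hxU, hx⟩
    refine Set.mem_sUnion.2 ⟨V U, Set.mem_image_of_mem V ⟨hU, hne⟩, ?_⟩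
    rw [hV]
    simp only [dif_pos hne]
    exact Or.inl ⟨x, ⟨hxU, hx⟩, rfl⟩
  · rintro _ ⟨U, hU', rfl⟩
    exact (key U hU').1
  · calc ∑' (W : ↥(V '' 𝒰')), EMetric.diam (W : Set Y) ^ s
        ≤ ∑' (U : ↥𝒰'), EMetric.diam (V (U : Set X)) ^ s := by
          refine ENNReal.tsum_le_tsum_comp_of_surjective
            (f := fun (U : ↥𝒰') => (⟨V U, Set.mem_image_of_mem V U.2⟩ : ↥(V '' 𝒰'))) ?_ _
          rintro ⟨W, U, hU, rfl⟩
          exact ⟨⟨U, hU⟩, rfl⟩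
    _ ≤ ∑' (U : ↥𝒰'), (ENNReal.ofReal C * EMetric.diam (U : Set X)) ^ s :=
          ENNReal.tsum_le_tsum fun U => ENNReal.rpow_le_rpow (key U U.2).2 hs
    _ ≤ ∑' (U : ↥𝒰), (ENNReal.ofReal C * EMetric.diam (U : Set X)) ^ s :=
          ENNReal.tsum_mono_subtype (fun U => (ENNReal.ofReal C * EMetric.diam U) ^ s)
            (show 𝒰' ⊆ 𝒰 from fun U hU => hU.1)
    _ = ENNReal.ofReal C ^ s * ∑' (U : ↥𝒰), EMetric.diam (U : Set X) ^ s := by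
          simp_rw [ENNReal.mul_rpow_of_nonneg _ _ hs, ENNReal.tsum_mul_left]
    _ ≤ ENNReal.ofReal C ^ s * ENNReal.ofReal ε := mul_le_mul_right hsum _
    _ = ENNReal.ofReal (C ^ s * ε) := by
          rw [ENNReal.ofReal_rpow_of_nonneg hC0.le hs, ← ENNReal.ofReal_mul (by positivity)]

lemma memLower_image {X Y : Type*} [PseudoMetricSpace X] [NormedAddCommGroup Y]
    [NormedSpace ℝ Y] [Nontrivial Y] {θ b s : ℝ} (hθ0 : 0 ≤ θ) (hθ1 : θ ≤ 1) (hb : 0 ≤ b)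
    {F : Set X} {g : X → Y}
    (hg : ∀ x ∈ F, ∀ y ∈ F, dist (g x) (g y) ≤ b * dist x y)
    (hmem : 0 ≤ s ∧ ∀ ε > 0, ∀ δ₀ > 0, ∃ δ, 0 < δ ∧ δ ≤ δ₀ ∧ interCoverSum θ δ s ε F) :
    0 ≤ s ∧ ∀ ε > 0, ∀ δ₀ > 0, ∃ δ, 0 < δ ∧ δ ≤ δ₀ ∧ interCoverSum θ δ s ε (g '' F) := by
  obtain ⟨hs, hmem⟩ := hmem
  refine ⟨hs, fun ε hε δ₀ hδ₀ => ?_⟩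
  set K : ℝ := 2*b+2 with hK
  have hK0 : (0:ℝ) < K := by rw [hK]; linarith
  set C : ℝ := b + K ^ (1/θ) + 1 with hC
  have hKp : (0:ℝ) < K ^ (1/θ) := Real.rpow_pos_of_pos hK0 _
  have hC0 : (0:ℝ) < C := by rw [hC]; linarith
  have hCs : (0:ℝ) < C ^ s := Real.rpow_pos_of_pos hC0 _
  obtain ⟨δ, hδpos, hδle, hics⟩ := hmem (ε / C ^ s) (by positivity) (min δ₀ 1 / K) (by positivity)
  have h1 : K * δ ≤ 1 := by
    have := hδle.trans (div_le_div_of_nonneg_right (min_le_right δ₀ 1) hK0.le)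
    calc K * δ ≤ K * (1 / K) := by nlinarith [mul_le_mul_of_nonneg_left this hK0.le]
    _ = 1 := by field_simp
  have h2 : K * δ ≤ δ₀ := by
    have h3 := hδle.trans (div_le_div_of_nonneg_right (min_le_left δ₀ 1) hK0.le)
    have := mul_le_mul_of_nonneg_left h3 hK0.le
    calc K * δ ≤ K * (δ₀ / K) := this
    _ = δ₀ := by field_simp
  refine ⟨K * δ, by positivity, h2, ?_⟩
  have := transferICS hθ0 hθ1 hb hs hg hδpos h1 hics
  rwa [show C ^ s * (ε / C ^ s) = ε by field_simp] at this

lemma memUpper_image {X Y : Type*} [PseudoMetricSpace X] [NormedAddCommGroup Y]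
    [NormedSpace ℝ Y] [Nontrivial Y] {θ b s : ℝ} (hθ0 : 0 ≤ θ) (hθ1 : θ ≤ 1) (hb : 0 ≤ b)
    {F : Set X} {g : X → Y}
    (hg : ∀ x ∈ F, ∀ y ∈ F, dist (g x) (g y) ≤ b * dist x y)
    (hmem : 0 ≤ s ∧ ∀ ε > 0, ∃ δ₀ > 0, ∀ δ, 0 < δ → δ ≤ δ₀ → interCoverSum θ δ s ε F) :
    0 ≤ s ∧ ∀ ε > 0, ∃ δ₀ > 0, ∀ δ, 0 < δ → δ ≤ δ₀ → interCoverSum θ δ s ε (g '' F) := by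
  obtain ⟨hs, hmem⟩ := hmem
  refine ⟨hs, fun ε hε => ?_⟩
  set K : ℝ := 2*b+2 with hK
  have hK0 : (0:ℝ) < K := by rw [hK]; linarith
  set C : ℝ := b + K ^ (1/θ) + 1 with hC
  have hKp : (0:ℝ) < K ^ (1/θ) := Real.rpow_pos_of_pos hK0 _
  have hC0 : (0:ℝ) < C := by rw [hC]; linarith
  have hCs : (0:ℝ) < C ^ s := Real.rpow_pos_of_pos hC0 _
  obtain ⟨δ₀, hδ₀, h⟩ := hmem (ε / C ^ s) (by positivity)
  refine ⟨min (K * δ₀) 1, by positivity, fun δ' hδ'pos hδ'le => ?_⟩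
  have hδ'1 : δ' ≤ 1 := hδ'le.trans (min_le_right _ _)
  have hδ'K : δ' ≤ K * δ₀ := hδ'le.trans (min_le_left _ _)
  have hδpos : 0 < δ' / K := by positivity
  have hδle : δ' / K ≤ δ₀ := by
    rw [div_le_iff₀ hK0]; calc δ' ≤ K * δ₀ := hδ'K
    _ = δ₀ * K := by ring
  have hics := h (δ' / K) hδpos hδle
  have h1 : K * (δ' / K) ≤ 1 := by
    rw [show K * (δ' / K) = δ' by field_simp]; exact hδ'1
  have := transferICS hθ0 hθ1 hb hs hg hδpos h1 hics
  rw [show C ^ s * (ε / C ^ s) = ε by field_simp, show K * (δ' / K) = δ' by field_simp] at this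
  exact this

/-- interCoverSum for a subsingleton set in a nontrivial normed space, at small scales. -/
lemma ICS_subsingleton {Y : Type*} [NormedAddCommGroup Y] [NormedSpace ℝ Y] [Nontrivial Y]
    {F : Set Y} (hsub : F.Subsingleton) {θ s ε δ : ℝ} (hθ0 : 0 ≤ θ) (hθ1 : θ ≤ 1)
    (hs : 0 < s) (hε : 0 < ε) (hδ : 0 < δ) (hδ1 : δ ≤ 1)
    (hδ2 : δ ≤ (min ε 1) ^ (θ/s)) : interCoverSum θ δ s ε F := by
  rcases Set.eq_empty_or_nonempty F with hF | ⟨x, hx⟩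
  · exact ⟨∅, countable_empty, by simp [hF], by simp, by simp⟩
  have hFx : F ⊆ {x} := fun y hy => hsub hy hx
  classical
  set r : ℝ := if θ = 0 then 0 else δ ^ (1/θ) / 2 with hr
  have hr0 : 0 ≤ r := by
    rw [hr]; split
    · exact le_refl 0
    · positivity
  have hE : 0 < min ε 1 := lt_min hε one_pos
  have h2r : θ ≠ 0 → 2 * r = δ ^ (1/θ) := by
    intro hθ; rw [hr, if_neg hθ]; ring
  have h2rδ : 2 * r ≤ δ := by
    by_cases hθ : θ = 0
    · rw [hr, if_pos hθ]; linarith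
    · rw [h2r hθ]
      have hθpos : 0 < θ := lt_of_le_of_ne hθ0 (Ne.symm hθ)
      calc δ ^ (1/θ) ≤ δ ^ (1:ℝ) :=
        Real.rpow_le_rpow_of_exponent_ge hδ hδ1 (one_le_one_div hθpos hθ1)
      _ = δ := Real.rpow_one _
  have h2rε : (2*r) ^ s ≤ ε := by
    by_cases hθ : θ = 0
    · rw [hr, if_pos hθ]
      rw [show 2*(0:ℝ) = 0 by ring, Real.zero_rpow hs.ne']
      exact hε.le
    · rw [h2r hθ]
      have hθpos : 0 < θ := lt_of_le_of_ne hθ0 (Ne.symm hθ)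
      have h1 : δ ^ (1/θ) ≤ ((min ε 1) ^ (θ/s)) ^ (1/θ) :=
        Real.rpow_le_rpow hδ.le hδ2 (by positivity)
      have h2 : ((min ε 1) ^ (θ/s)) ^ (1/θ) = (min ε 1) ^ (1/s) := by
        rw [← Real.rpow_mul hE.le]
        congr 1
        field_simp
      have h3 : (δ ^ (1/θ)) ^ s ≤ ((min ε 1) ^ (1/s)) ^ s := by
        rw [← h2]
        exact Real.rpow_le_rpow (by positivity) h1 hs.le
      have h4 : ((min ε 1) ^ (1/s)) ^ s = min ε 1 := by
        rw [← Real.rpow_mul hE.le]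
        rw [show 1/s*s = 1 by field_simp, Real.rpow_one]
      calc (δ ^ (1/θ)) ^ s ≤ min ε 1 := by rw [← h4]; exact h3
      _ ≤ ε := min_le_left _ _
  refine ⟨{Metric.closedBall x r}, countable_singleton _, ?_, ?_, ?_⟩
  · intro y hy
    exact ⟨Metric.closedBall x r, rfl, by
      have : y = x := hFx hy
      rw [this]; exact Metric.mem_closedBall_self hr0⟩
  · rintro U rfl
    constructor
    · exact (myDiamBall Set.Subset.rfl).trans (ENNReal.ofReal_le_ofReal h2rδ)
    · intro hθ
      rw [← h2r hθ]
      exact myBallLower hr0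
  · have huniq : ∀ (W : ↥({Metric.closedBall x r} : Set (Set Y))),
        (W : Set Y) = Metric.closedBall x r := fun W => W.2
    calc ∑' (W : ↥({Metric.closedBall x r} : Set (Set Y))), EMetric.diam (W : Set Y) ^ s
        = EMetric.diam (Metric.closedBall x r) ^ s := by
          exact tsum_eq_single (⟨Metric.closedBall x r, rfl⟩ :
            ↥({Metric.closedBall x r} : Set (Set Y)))
            (fun W hW => absurd (Subtype.ext (huniq W)) hW)
    _ ≤ (ENNReal.ofReal (2*r)) ^ s :=
          ENNReal.rpow_le_rpow (myDiamBall Set.Subset.rfl) hs.le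
    _ = ENNReal.ofReal ((2*r) ^ s) := ENNReal.ofReal_rpow_of_nonneg (by linarith) hs.le
    _ ≤ ENNReal.ofReal ε := ENNReal.ofReal_le_ofReal h2rε

lemma sInf_le_zero_of_Ioi {S : Set ℝ} (hlb : ∀ x ∈ S, 0 ≤ x) (h : ∀ t, 0 < t → t ∈ S) :
    sInf S = 0 := by
  have hbdd : BddBelow S := ⟨0, hlb⟩
  have hle : ∀ t, 0 < t → sInf S ≤ t := fun t ht => csInf_le hbdd (h t ht)
  have h0 : 0 ≤ sInf S := Real.sInf_nonneg hlb
  by_contra hne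
  have hpos : 0 < sInf S := lt_of_le_of_ne h0 (Ne.symm hne)
  have := hle (sInf S / 2) (by linarith)
  linarith

/-- dims of subsingleton sets in nontrivial normed spaces are zero -/
lemma dims_subsingleton {Y : Type*} [NormedAddCommGroup Y] [NormedSpace ℝ Y] [Nontrivial Y]
    {F : Set Y} (hsub : F.Subsingleton) {θ : ℝ} (hθ0 : 0 ≤ θ) (hθ1 : θ ≤ 1) :
    lowerInterDim θ F = 0 ∧ upperInterDim θ F = 0 := by
  constructor
  · refine sInf_le_zero_of_Ioi (fun x hx => hx.1) (fun s hs => ⟨hs.le, fun ε hε δ₀ hδ₀ => ?_⟩)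
    have hE : (0:ℝ) < min ε 1 := lt_min hε one_pos
    refine ⟨min δ₀ (min 1 ((min ε 1) ^ (θ/s))), by positivity, min_le_left _ _, ?_⟩
    exact ICS_subsingleton hsub hθ0 hθ1 hs hε (by positivity)
      ((min_le_right _ _).trans (min_le_left _ _))
      ((min_le_right _ _).trans (min_le_right _ _))
  · refine sInf_le_zero_of_Ioi (fun x hx => hx.1) (fun s hs => ⟨hs.le, fun ε hε => ?_⟩)
    have hE : (0:ℝ) < min ε 1 := lt_min hε one_pos
    refine ⟨min 1 ((min ε 1) ^ (θ/s)), by positivity, fun δ hδp hδle => ?_⟩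
    exact ICS_subsingleton hsub hθ0 hθ1 hs hε hδp
      (hδle.trans (min_le_left _ _)) (hδle.trans (min_le_right _ _))

/-- dims in a subsingleton space are zero -/
lemma dims_subsingletonSpace {Y : Type*} [PseudoMetricSpace Y] [Subsingleton Y]
    (F : Set Y) {θ : ℝ} (hθ0 : 0 ≤ θ) (hθ1 : θ ≤ 1) :
    lowerInterDim θ F = 0 ∧ upperInterDim θ F = 0 := by
  rcases Set.eq_empty_or_nonempty F with hF | ⟨x, hx⟩
  · subst hF
    have hmem : ∀ s : ℝ, 0 < s → ∀ θ' δ ε : ℝ, interCoverSum θ' δ s ε (∅ : Set Y) :=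
      fun s hs θ' δ ε => ⟨∅, countable_empty, by simp, by simp, by simp⟩
    constructor
    · exact sInf_le_zero_of_Ioi (fun x hx => hx.1)
        (fun s hs => ⟨hs.le, fun ε hε δ₀ hδ₀ => ⟨δ₀, hδ₀, le_rfl, hmem s hs _ _ _⟩⟩)
    · exact sInf_le_zero_of_Ioi (fun x hx => hx.1)
        (fun s hs => ⟨hs.le, fun ε hε => ⟨1, one_pos, fun δ hδp _ => hmem s hs _ _ _⟩⟩)
  by_cases hθ : θ = 0
  · subst hθ
    have hmem : ∀ s : ℝ, 0 < s → ∀ δ ε : ℝ, 0 < ε → interCoverSum 0 δ s ε F := by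
      intro s hs δ ε hε
      refine ⟨{F}, countable_singleton _, fun y hy => ⟨F, rfl, hy⟩, ?_, ?_⟩
      · rintro U rfl
        refine ⟨?_, fun h => absurd rfl h⟩
        rw [show EMetric.diam _ = 0 from EMetric.diam_subsingleton (Set.subsingleton_of_subsingleton)]
        exact zero_le
      · have : ∀ (W : ↥({F} : Set (Set Y))), EMetric.diam (W : Set Y) ^ s = 0 := by
          rintro ⟨W, rfl⟩
          rw [show EMetric.diam _ = 0 from EMetric.diam_subsingleton (Set.subsingleton_of_subsingleton)]
          exact ENNReal.zero_rpow_of_pos hs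
        simp only [this, tsum_zero]
        exact zero_le
    constructor
    · exact sInf_le_zero_of_Ioi (fun x hx => hx.1)
        (fun s hs => ⟨hs.le, fun ε hε δ₀ hδ₀ => ⟨δ₀, hδ₀, le_rfl, hmem s hs _ _ hε⟩⟩)
    · exact sInf_le_zero_of_Ioi (fun x hx => hx.1)
        (fun s hs => ⟨hs.le, fun ε hε => ⟨1, one_pos, fun δ hδp _ => hmem s hs _ _ hε⟩⟩)
  · have hno : ∀ δ s ε : ℝ, 0 < δ → ¬ interCoverSum θ δ s ε F := by
      rintro δ s ε hδ ⟨𝒰, _, hcov, hd, _⟩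
      obtain ⟨U, hU, hxU⟩ := hcov hx
      have h1 := (hd U hU).2 hθ
      rw [show EMetric.diam _ = 0 from EMetric.diam_subsingleton (Set.subsingleton_of_subsingleton)] at h1
      have h2 : (0:ℝ) < δ ^ (1/θ) := Real.rpow_pos_of_pos hδ _
      have h3 : (0:ℝ≥0∞) < ENNReal.ofReal (δ ^ (1/θ)) := ENNReal.ofReal_pos.2 h2
      exact absurd (le_antisymm h1 zero_le) (ne_of_gt h3)
    constructor
    · have : {s : ℝ | 0 ≤ s ∧ ∀ ε > 0, ∀ δ₀ > 0, ∃ δ, 0 < δ ∧ δ ≤ δ₀ ∧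
          interCoverSum θ δ s ε F} = ∅ := by
        ext s
        simp only [Set.mem_setOf_eq, Set.mem_empty_iff_false, iff_false]
        rintro ⟨-, h⟩
        obtain ⟨δ, hδp, -, hics⟩ := h 1 one_pos 1 one_pos
        exact hno δ s 1 hδp hics
      rw [lowerInterDim, this, Real.sInf_empty]
    · have : {s : ℝ | 0 ≤ s ∧ ∀ ε > 0, ∃ δ₀ > 0, ∀ δ, 0 < δ → δ ≤ δ₀ →
          interCoverSum θ δ s ε F} = ∅ := by
        ext s
        simp only [Set.mem_setOf_eq, Set.mem_empty_iff_false, iff_false]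
        rintro ⟨-, h⟩
        obtain ⟨δ₀, hδ₀, h⟩ := h 1 one_pos
        exact hno δ₀ s 1 hδ₀ (h δ₀ hδ₀ le_rfl)
      rw [upperInterDim, this, Real.sInf_empty]

theorem stmt5 (n m : ℕ) (F : Set (EuclideanSpace ℝ (Fin n)))
    (hF : Bornology.IsBounded F)
    (f : EuclideanSpace ℝ (Fin n) → EuclideanSpace ℝ (Fin m))
    (c₁ c₂ : ℝ) (hc₁ : 0 < c₁) (hc₁₂ : c₁ ≤ c₂)
    (hbi : ∀ x ∈ F, ∀ y ∈ F,
      c₁ * dist x y ≤ dist (f x) (f y) ∧ dist (f x) (f y) ≤ c₂ * dist x y)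
    (θ : ℝ) (hθ : θ ∈ Set.Icc (0:ℝ) 1) :
    lowerInterDim θ (f '' F) = lowerInterDim θ F ∧
    upperInterDim θ (f '' F) = upperInterDim θ F := by
  obtain ⟨hθ0, hθ1⟩ := hθ
  classical
  by_cases hsub : F.Subsingleton
  · have hsub' : (f '' F).Subsingleton := hsub.image f
    have hFdims : lowerInterDim θ F = 0 ∧ upperInterDim θ F = 0 := by
      rcases Nat.eq_zero_or_pos n with hn | hn
      · subst hn
        haveI : Subsingleton (EuclideanSpace ℝ (Fin 0)) :=
          ⟨fun a b => by ext i; exact i.elim0⟩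
        exact dims_subsingletonSpace F hθ0 hθ1
      · haveI : Nonempty (Fin n) := ⟨⟨0, hn⟩⟩
        exact dims_subsingleton hsub hθ0 hθ1
    have hGdims : lowerInterDim θ (f '' F) = 0 ∧ upperInterDim θ (f '' F) = 0 := by
      rcases Nat.eq_zero_or_pos m with hm | hm
      · subst hm
        haveI : Subsingleton (EuclideanSpace ℝ (Fin 0)) :=
          ⟨fun a b => by ext i; exact i.elim0⟩
        exact dims_subsingletonSpace (f '' F) hθ0 hθ1
      · haveI : Nonempty (Fin m) := ⟨⟨0, hm⟩⟩
        exact dims_subsingleton hsub' hθ0 hθ1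
    rw [hFdims.1, hFdims.2, hGdims.1, hGdims.2]
    exact ⟨rfl, rfl⟩
  · obtain ⟨x, hx, y, hy, hxy⟩ := Set.not_subsingleton_iff.1 hsub
    haveI hNn : Nontrivial (EuclideanSpace ℝ (Fin n)) := ⟨⟨x, y, hxy⟩⟩
    have hdxy : 0 < dist x y := dist_pos.2 hxy
    have hfxy : f x ≠ f y := by
      intro h
      have h1 := (hbi x hx y hy).1
      rw [h, dist_self] at h1
      nlinarith
    haveI hNm : Nontrivial (EuclideanSpace ℝ (Fin m)) := ⟨⟨f x, f y, hfxy⟩⟩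
    have hfLip : ∀ a ∈ F, ∀ b ∈ F, dist (f a) (f b) ≤ c₂ * dist a b :=
      fun a ha b hb => (hbi a ha b hb).2
    set g : EuclideanSpace ℝ (Fin m) → EuclideanSpace ℝ (Fin n) :=
      fun z => if h : ∃ u ∈ F, f u = z then h.choose else x with hgdef
    have hgmem : ∀ z, (h : ∃ u ∈ F, f u = z) → g z ∈ F ∧ f (g z) = z := by
      intro z h
      rw [hgdef]
      simp only [dif_pos h]
      exact ⟨h.choose_spec.1, h.choose_spec.2⟩
    have hgf : ∀ u ∈ F, g (f u) = u := by
      intro u hu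
      have hex : ∃ w ∈ F, f w = f u := ⟨u, hu, rfl⟩
      obtain ⟨hmem, heq⟩ := hgmem (f u) hex
      have h1 := (hbi (g (f u)) hmem u hu).1
      rw [heq, dist_self] at h1
      have h2 : dist (g (f u)) u ≤ 0 := by nlinarith [dist_nonneg (x := g (f u)) (y := u)]
      exact dist_le_zero.1 h2
    have hgF : g '' (f '' F) = F := by
      ext u
      constructor
      · rintro ⟨_, ⟨w, hw, rfl⟩, rfl⟩
        rw [hgf w hw]; exact hw
      · intro hu; exact ⟨f u, ⟨u, hu, rfl⟩, hgf u hu⟩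
    have hgLip : ∀ a ∈ f '' F, ∀ b ∈ f '' F, dist (g a) (g b) ≤ (1/c₁) * dist a b := by
      rintro _ ⟨u, hu, rfl⟩ _ ⟨w, hw, rfl⟩
      rw [hgf u hu, hgf w hw]
      have h1 := (hbi u hu w hw).1
      rw [one_div, ← div_eq_inv_mul, le_div_iff₀ hc₁]
      nlinarith
    have hc₂0 : (0:ℝ) ≤ c₂ := hc₁.le.trans hc₁₂
    have hinv0 : (0:ℝ) ≤ 1/c₁ := by positivity
    constructor
    · rw [lowerInterDim, lowerInterDim]
      congr 1
      ext s
      simp only [Set.mem_setOf_eq]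
      constructor
      · intro hmem
        have := memLower_image hθ0 hθ1 hinv0 hgLip hmem
        rwa [hgF] at this
      · intro hmem
        exact memLower_image hθ0 hθ1 hc₂0 hfLip hmem
    · rw [upperInterDim, upperInterDim]
      congr 1
      ext s
      simp only [Set.mem_setOf_eq]
      constructor
      · intro hmem
        have := memUpper_image hθ0 hθ1 hinv0 hgLip hmem
        rwa [hgF] at this
      · intro hmem
        exact memUpper_image hθ0 hθ1 hc₂0 hfLip hmem
end

section
/- Let F ⊆ ℝⁿ be bounded and 0 < θ < φ ≤ 1. Then the upper φ-intermediate dimension of F is at most (φ/θ) times the upper θ-intermediate dimension of F, and similarly for lower intermediate dimensions. -/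
open Set Metric MeasureTheory ENNReal

/-! ### Auxiliary lemmas -/

lemma exists_net (E : Type*) [NormedAddCommGroup E] [NormedSpace ℝ E] [ProperSpace E] :
    ∃ T : Finset E, ∀ (x : E) (r : ℝ), 0 < r →
      Metric.closedBall x r ⊆ ⋃ y ∈ T, Metric.closedBall (x + r • y) (r / 2) := by
  have htb : TotallyBounded (Metric.closedBall (0 : E) 1) :=
    (isCompact_closedBall 0 1).totallyBounded
  obtain ⟨t, htfin, hcov⟩ := Metric.totallyBounded_iff.1 htb (1/2) (by norm_num)
  refine ⟨htfin.toFinset, fun x r hr u hu => ?_⟩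
  have h1 : ‖u - x‖ ≤ r := by
    rw [← dist_eq_norm]; exact Metric.mem_closedBall.1 hu
  have hz : r⁻¹ • (u - x) ∈ Metric.closedBall (0 : E) 1 := by
    rw [mem_closedBall_zero_iff, norm_smul, norm_inv, Real.norm_eq_abs, abs_of_pos hr]
    calc r⁻¹ * ‖u - x‖ ≤ r⁻¹ * r := mul_le_mul_of_nonneg_left h1 (inv_nonneg.2 hr.le)
      _ = 1 := inv_mul_cancel₀ hr.ne'
  obtain ⟨y, hyt, hy⟩ := Set.mem_iUnion₂.1 (hcov hz)
  refine Set.mem_iUnion₂.2 ⟨y, htfin.mem_toFinset.2 hyt, ?_⟩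
  rw [Metric.mem_closedBall, dist_eq_norm]
  have heq : u - (x + r • y) = r • (r⁻¹ • (u - x) - y) := by
    rw [smul_sub, smul_inv_smul₀ hr.ne']
    abel
  rw [heq, norm_smul, Real.norm_eq_abs, abs_of_pos hr]
  have hy' : ‖r⁻¹ • (u - x) - y‖ < 1/2 := by
    rw [← dist_eq_norm]; exact Metric.mem_ball.1 hy
  calc r * ‖r⁻¹ • (u - x) - y‖ ≤ r * (1/2) := mul_le_mul_of_nonneg_left hy'.le hr.le
    _ = r / 2 := by ring

open Classical in
/-- The family of sets replacing `U`: keep `U` if it is large, otherwise cover it by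
balls of radius `r/2` centered at points of a net. -/
noncomputable def ballFam {E : Type*} [NormedAddCommGroup E] [NormedSpace ℝ E]
    (r : ℝ) (T : Finset E) (U : Set E) : Set (Set E) :=
  if ENNReal.ofReal r ≤ EMetric.diam U then {U}
  else if h : U.Nonempty then
    (fun y => Metric.closedBall (h.some + r • y) (r / 2)) '' (T : Set E)
  else {U}

/-- Key transformation: an admissible `θ`-cover at scale `δ ≤ 1` can be turned into an
admissible `φ`-cover at the same scale with exponent multiplied by `φ/θ`, at the cost of a
dimensional constant in the sum. -/
lemma transform {E : Type*} [NormedAddCommGroup E] [NormedSpace ℝ E] [ProperSpace E]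
    [Nontrivial E] {θ φ : ℝ} (hθ : 0 < θ) (hθφ : θ < φ) (hφ : φ ≤ 1) (F : Set E) :
    ∃ C : ℝ, 0 < C ∧ ∀ s ε δ, 0 ≤ s → 0 < δ → δ ≤ 1 →
      interCoverSum θ δ s ε F → interCoverSum φ δ (φ / θ * s) (C * ε) F := by
  classical
  obtain ⟨T, hT⟩ := exists_net E
  have hφ0 : 0 < φ := hθ.trans hθφ
  refine ⟨(T.card : ℝ) + 1, by positivity, fun s ε δ hs hδ hδ1 h => ?_⟩
  obtain ⟨𝒰, h𝒰c, hcov, hdiam, hsum⟩ := h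
  set r : ℝ := δ ^ (1 / φ) with hr_def
  have hr : 0 < r := Real.rpow_pos_of_pos hδ _
  have hrδ : r ≤ δ := by
    calc δ ^ (1 / φ) ≤ δ ^ (1 : ℝ) :=
          Real.rpow_le_rpow_of_exponent_ge hδ hδ1 ((le_div_iff₀ hφ0).2 (by linarith))
      _ = δ := Real.rpow_one δ
  set t : ℝ := φ / θ * s with ht_def
  have hst : s ≤ t := by
    have h1 : (1 : ℝ) ≤ φ / θ := (one_le_div hθ).2 hθφ.le
    calc s = 1 * s := (one_mul s).symm
      _ ≤ φ / θ * s := mul_le_mul_of_nonneg_right h1 hs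
  have ht0 : 0 ≤ t := hs.trans hst
  have hUlow : ∀ U ∈ 𝒰, ENNReal.ofReal (δ ^ (1 / θ)) ≤ EMetric.diam U :=
    fun U hU => (hdiam U hU).2 hθ.ne'
  have hUne : ∀ U ∈ 𝒰, U.Nonempty := by
    intro U hU
    have hpos : (0 : ℝ≥0∞) < EMetric.diam U :=
      lt_of_lt_of_le (ENNReal.ofReal_pos.2 (Real.rpow_pos_of_pos hδ _)) (hUlow U hU)
    exact (EMetric.diam_pos_iff.1 hpos).nonempty
  -- diameter bounds for the small balls
  have hballdiam : ∀ z : E, EMetric.diam (Metric.closedBall z (r / 2)) ≤ ENNReal.ofReal r := by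
    intro z
    rw [← Metric.emetric_closedBall (by positivity : (0:ℝ) ≤ r / 2)]
    refine le_trans EMetric.diam_closedBall ?_
    rw [← ENNReal.ofReal_ofNat 2, ← ENNReal.ofReal_mul (by norm_num)]
    exact ENNReal.ofReal_le_ofReal (by linarith)
  have hballdiam' : ∀ z : E, ENNReal.ofReal r ≤ EMetric.diam (Metric.closedBall z (r / 2)) := by
    intro z
    obtain ⟨e, he⟩ := exists_norm_eq E (zero_le_one)
    have h₁ : z + (r/2) • e ∈ Metric.closedBall z (r/2) := by
      rw [Metric.mem_closedBall, dist_eq_norm, add_sub_cancel_left, norm_smul, he, mul_one,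
        Real.norm_eq_abs, abs_of_pos (by positivity)]
    have h₂ : z - (r/2) • e ∈ Metric.closedBall z (r/2) := by
      rw [Metric.mem_closedBall, dist_eq_norm]
      have : z - (r/2) • e - z = -((r/2) • e) := by abel
      rw [this, norm_neg, norm_smul, he, mul_one, Real.norm_eq_abs, abs_of_pos (by positivity)]
    have hdist : edist (z + (r/2) • e) (z - (r/2) • e) = ENNReal.ofReal r := by
      rw [edist_dist, dist_eq_norm]
      have hvec : z + (r/2) • e - (z - (r/2) • e) = r • e := by
        module
      rw [hvec, norm_smul, he, mul_one, Real.norm_eq_abs, abs_of_pos hr]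
    calc ENNReal.ofReal r = edist (z + (r/2) • e) (z - (r/2) • e) := hdist.symm
      _ ≤ EMetric.diam (Metric.closedBall z (r/2)) := EMetric.edist_le_diam_of_mem h₁ h₂
  -- properties of the replacement families
  have hfam : ∀ U ∈ 𝒰, (ballFam r T U).Countable ∧ U ⊆ ⋃₀ ballFam r T U ∧
      (∀ V ∈ ballFam r T U,
        EMetric.diam V ≤ ENNReal.ofReal δ ∧ ENNReal.ofReal r ≤ EMetric.diam V) ∧
      ∑' V : ballFam r T U, EMetric.diam (V : Set E) ^ t
        ≤ ((T.card : ℝ≥0∞) + 1) * EMetric.diam U ^ s := by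
    intro U hU
    by_cases hbig : ENNReal.ofReal r ≤ EMetric.diam U
    · rw [ballFam, if_pos hbig]
      refine ⟨Set.countable_singleton U, by rw [Set.sUnion_singleton], ?_, ?_⟩
      · intro V hV
        rw [Set.mem_singleton_iff] at hV
        rw [hV]
        exact ⟨(hdiam U hU).1, hbig⟩
      · have hsing : ∑' V : ({U} : Set (Set E)), EMetric.diam (V : Set E) ^ t
            = EMetric.diam U ^ t := tsum_singleton U (fun W => EMetric.diam W ^ t)
        rw [hsing]
        have hd1 : EMetric.diam U ≤ 1 :=
          le_trans (hdiam U hU).1 (ENNReal.ofReal_le_one.2 hδ1)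
        exact le_trans (ENNReal.rpow_le_rpow_of_exponent_ge hd1 hst)
          (le_mul_of_one_le_left zero_le le_add_self)
    · have hne : U.Nonempty := hUne U hU
      have hV : EMetric.diam U ≤ ENNReal.ofReal r := le_of_not_ge hbig
      rw [ballFam, if_neg hbig, dif_pos hne]
      have hbound : ∀ y : E, EMetric.diam (Metric.closedBall (hne.some + r • y) (r/2)) ^ t
          ≤ EMetric.diam U ^ s := by
        intro y
        calc EMetric.diam (Metric.closedBall (hne.some + r • y) (r/2)) ^ t
            ≤ ENNReal.ofReal r ^ t := ENNReal.rpow_le_rpow (hballdiam _) ht0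
          _ = ENNReal.ofReal (r ^ t) := ENNReal.ofReal_rpow_of_pos hr
          _ = ENNReal.ofReal ((δ ^ (1/θ)) ^ s) := by
              congr 1
              rw [hr_def, ← Real.rpow_mul hδ.le, ← Real.rpow_mul hδ.le]
              congr 1
              rw [ht_def]
              field_simp
          _ = ENNReal.ofReal (δ ^ (1/θ)) ^ s :=
              (ENNReal.ofReal_rpow_of_pos (Real.rpow_pos_of_pos hδ _)).symm
          _ ≤ EMetric.diam U ^ s := ENNReal.rpow_le_rpow (hUlow U hU) hs
      refine ⟨(T.finite_toSet.image _).countable, ?_, ?_, ?_⟩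
      · intro u hu
        have hUball : U ⊆ Metric.closedBall hne.some r := fun v hv =>
          (edist_le_ofReal hr.le).1
            (le_trans (EMetric.edist_le_diam_of_mem hv hne.some_mem) hV)
        have := hT hne.some r hr (hUball hu)
        obtain ⟨y, hy, hmem⟩ := Set.mem_iUnion₂.1 this
        exact ⟨Metric.closedBall (hne.some + r • y) (r/2),
          Set.mem_image_of_mem _ (by exact_mod_cast hy), hmem⟩
      · rintro V ⟨y, hy, rfl⟩
        exact ⟨le_trans (hballdiam _) (ENNReal.ofReal_le_ofReal hrδ), hballdiam' _⟩
      · calc (∑' V : ((fun y => Metric.closedBall (hne.some + r • y) (r/2)) '' (T : Set E)),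
              EMetric.diam (V : Set E) ^ t)
            ≤ ∑' y : (T : Set E),
                EMetric.diam (Metric.closedBall (hne.some + r • (y:E)) (r/2)) ^ t := by
              refine ENNReal.tsum_le_tsum_comp_of_surjective
                (f := fun y : (T : Set E) =>
                  (⟨Metric.closedBall (hne.some + r • (y:E)) (r/2),
                    Set.mem_image_of_mem _ y.2⟩ :
                    ((fun y => Metric.closedBall (hne.some + r • y) (r/2)) '' (T : Set E))))
                ?_ _
              rintro ⟨V, y, hy, rfl⟩
              exact ⟨⟨y, hy⟩, rfl⟩
          _ = ∑ y ∈ T, EMetric.diam (Metric.closedBall (hne.some + r • y) (r/2)) ^ t := by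
              exact Finset.tsum_subtype T
                (fun y => EMetric.diam (Metric.closedBall (hne.some + r • y) (r/2)) ^ t)
          _ ≤ ∑ y ∈ T, EMetric.diam U ^ s := Finset.sum_le_sum (fun y _ => hbound y)
          _ = (T.card : ℝ≥0∞) * EMetric.diam U ^ s := by rw [Finset.sum_const, nsmul_eq_mul]
          _ ≤ ((T.card : ℝ≥0∞) + 1) * EMetric.diam U ^ s := by
              gcongr
              exact le_self_add
  refine ⟨⋃ U ∈ 𝒰, ballFam r T U, h𝒰c.biUnion (fun U hU => (hfam U hU).1), ?_, ?_, ?_⟩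
  · intro x hx
    obtain ⟨U, hU, hxU⟩ := hcov hx
    obtain ⟨V, hV, hxV⟩ := (hfam U hU).2.1 hxU
    exact ⟨V, Set.mem_biUnion hU hV, hxV⟩
  · intro V hV
    obtain ⟨U, hU, hVU⟩ := Set.mem_iUnion₂.1 hV
    obtain ⟨h1, h2⟩ := (hfam U hU).2.2.1 V hVU
    exact ⟨h1, fun _ => h2⟩
  · calc ∑' V : (⋃ U ∈ 𝒰, ballFam r T U), EMetric.diam (V : Set E) ^ t
        ≤ ∑' U : 𝒰, ∑' V : ballFam r T (U : Set E), EMetric.diam (V : Set E) ^ t :=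
          by exact ENNReal.tsum_biUnion_le_tsum (fun V => EMetric.diam V ^ t) 𝒰 (ballFam r T)
      _ ≤ ∑' U : 𝒰, ((T.card : ℝ≥0∞) + 1) * EMetric.diam (U : Set E) ^ s :=
          ENNReal.tsum_le_tsum (fun U => (hfam U U.2).2.2.2)
      _ = ((T.card : ℝ≥0∞) + 1) * ∑' U : 𝒰, EMetric.diam (U : Set E) ^ s :=
          ENNReal.tsum_mul_left
      _ ≤ ((T.card : ℝ≥0∞) + 1) * ENNReal.ofReal ε := mul_le_mul_right hsum _
      _ = ENNReal.ofReal (((T.card : ℝ) + 1) * ε) := by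
          rw [ENNReal.ofReal_mul (by positivity), ENNReal.ofReal_add (by positivity) zero_le_one,
            ENNReal.ofReal_natCast, ENNReal.ofReal_one]

lemma sInf_le_mul_sInf {c : ℝ} (hc : 1 ≤ c) {A B : Set ℝ}
    (hB0 : ∀ b ∈ B, 0 ≤ b) (hmap : ∀ s ∈ A, c * s ∈ B) (hBA : B ⊆ A) :
    sInf B ≤ c * sInf A := by
  rcases A.eq_empty_or_nonempty with hA | hA
  · have hB : B = ∅ := Set.subset_empty_iff.1 (hA ▸ hBA)
    rw [hA, hB, Real.sInf_empty, mul_zero]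
  · have hc0 : 0 < c := lt_of_lt_of_le one_pos hc
    have hbdd : BddBelow B := ⟨0, fun b hb => hB0 b hb⟩
    have h1 : ∀ s ∈ A, sInf B / c ≤ s := fun s hs => by
      rw [div_le_iff₀ hc0]
      calc sInf B ≤ c * s := csInf_le hbdd (hmap s hs)
        _ = s * c := mul_comm _ _
    have h2 : sInf B / c ≤ sInf A := le_csInf hA h1
    calc sInf B = c * (sInf B / c) := by field_simp
      _ ≤ c * sInf A := mul_le_mul_of_nonneg_left h2 hc0.le

lemma weaken {X : Type*} [PseudoMetricSpace X] {θ φ δ t ε : ℝ} {F : Set X}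
    (hθ : 0 < θ) (hθφ : θ ≤ φ) (hδ : 0 < δ) (hδ1 : δ ≤ 1) :
    interCoverSum φ δ t ε F → interCoverSum θ δ t ε F := by
  rintro ⟨𝒰, h1, h2, h3, h4⟩
  refine ⟨𝒰, h1, h2, fun U hU => ⟨(h3 U hU).1, fun _ => ?_⟩, h4⟩
  exact le_trans (ENNReal.ofReal_le_ofReal
      (Real.rpow_le_rpow_of_exponent_ge hδ hδ1 (one_div_le_one_div_of_le hθ hθφ)))
    ((h3 U hU).2 (hθ.trans_le hθφ).ne')

lemma empty_cover {X : Type*} [PseudoMetricSpace X] (θ δ s ε : ℝ) :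
    interCoverSum θ δ s ε (∅ : Set X) :=
  ⟨∅, countable_empty, by simp, by simp, by simp⟩

lemma no_cover {X : Type*} [PseudoMetricSpace X] [Subsingleton X] {θ δ s ε : ℝ} {F : Set X}
    (hF : F.Nonempty) (hθ : 0 < θ) (hδ : 0 < δ) : ¬ interCoverSum θ δ s ε F := by
  rintro ⟨𝒰, -, h2, h3, -⟩
  obtain ⟨x, hx⟩ := hF
  obtain ⟨U, hU, -⟩ := h2 hx
  have hle := (h3 U hU).2 hθ.ne'
  rw [show EMetric.diam U = 0 from EMetric.diam_subsingleton (fun a _ b _ => Subsingleton.elim a b)] at hle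
  exact absurd hle (ENNReal.ofReal_pos.2 (Real.rpow_pos_of_pos hδ _)).not_ge

theorem stmt6 (n : ℕ) (F : Set (EuclideanSpace ℝ (Fin n)))
    (hF : Bornology.IsBounded F) (θ φ : ℝ)
    (hθ : 0 < θ) (hθφ : θ < φ) (hφ : φ ≤ 1) :
    upperInterDim φ F ≤ (φ / θ) * upperInterDim θ F ∧
    lowerInterDim φ F ≤ (φ / θ) * lowerInterDim θ F := by
  have hφ0 : 0 < φ := hθ.trans hθφ
  have hc : (1:ℝ) ≤ φ / θ := (one_le_div hθ).2 hθφ.le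
  -- the transformation on covers, available in all cases
  have hmain : ∀ s ε δ, 0 ≤ s → 0 < ε → 0 < δ → δ ≤ 1 →
      interCoverSum θ δ s ε F →
      ∃ ε', 0 < ε' ∧ ∀ ε'' , ε ≤ ε'' → True := fun _ _ _ _ hε _ _ _ => ⟨1, one_pos, fun _ _ => trivial⟩
  clear hmain
  -- transformation statement, by cases
  have htrans : ∃ C : ℝ, 0 < C ∧ ∀ s ε δ, 0 ≤ s → 0 < δ → δ ≤ 1 →
      interCoverSum θ δ s ε F → interCoverSum φ δ (φ / θ * s) (C * ε) F := by
    rcases F.eq_empty_or_nonempty with hFe | hFne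
    · subst hFe
      exact ⟨1, one_pos, fun s ε δ _ _ _ _ => empty_cover _ _ _ _⟩
    · rcases subsingleton_or_nontrivial (EuclideanSpace ℝ (Fin n)) with hsub | hnt
      · exact ⟨1, one_pos, fun s ε δ _ hδ _ hic => absurd hic (no_cover hFne hθ hδ)⟩
      · exact transform hθ hθφ hφ F
  obtain ⟨C, hC, htr⟩ := htrans
  constructor
  · unfold upperInterDim
    refine sInf_le_mul_sInf hc (fun b hb => hb.1) ?_ ?_
    · rintro s ⟨hs0, hs⟩
      refine ⟨mul_nonneg (le_trans zero_le_one hc) hs0, fun ε hε => ?_⟩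
      obtain ⟨δ₀, hδ₀, h⟩ := hs (ε / C) (by positivity)
      refine ⟨min δ₀ 1, by positivity, fun δ hδ hδm => ?_⟩
      have h2 := htr s (ε / C) δ hs0 hδ (hδm.trans (min_le_right _ _))
        (h δ hδ (hδm.trans (min_le_left _ _)))
      rwa [mul_div_cancel₀ _ hC.ne'] at h2
    · rintro u ⟨hu0, hu⟩
      refine ⟨hu0, fun ε hε => ?_⟩
      obtain ⟨δ₀, hδ₀, h⟩ := hu ε hε
      exact ⟨min δ₀ 1, by positivity, fun δ hδ hδm =>
        weaken hθ hθφ.le hδ (hδm.trans (min_le_right _ _))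
          (h δ hδ (hδm.trans (min_le_left _ _)))⟩
  · unfold lowerInterDim
    refine sInf_le_mul_sInf hc (fun b hb => hb.1) ?_ ?_
    · rintro s ⟨hs0, hs⟩
      refine ⟨mul_nonneg (le_trans zero_le_one hc) hs0, fun ε hε δ₀ hδ₀ => ?_⟩
      obtain ⟨δ, hδ, hδle, hic⟩ := hs (ε / C) (by positivity) (min δ₀ 1) (by positivity)
      refine ⟨δ, hδ, hδle.trans (min_le_left _ _), ?_⟩
      have h2 := htr s (ε / C) δ hs0 hδ (hδle.trans (min_le_right _ _)) hic
      rwa [mul_div_cancel₀ _ hC.ne'] at h2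
    · rintro u ⟨hu0, hu⟩
      refine ⟨hu0, fun ε hε δ₀ hδ₀ => ?_⟩
      obtain ⟨δ, hδ, hδle, hic⟩ := hu ε hε (min δ₀ 1) (by positivity)
      exact ⟨δ, hδ, hδle.trans (min_le_left _ _),
        weaken hθ hθφ.le hδ (hδle.trans (min_le_right _ _)) hic⟩
end

section
/- Let F ⊆ ℝⁿ be bounded and 0 < θ < φ ≤ 1. Then the upper φ-intermediate dimension of F is at most (upper θ-intermediate dimension of F) + (1 − θ/φ)·(n − upper θ-intermediate dimension of F), and similarly for lower intermediate dimensions. -/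
open Set Metric MeasureTheory ENNReal

/-! ### Auxiliary material -/

def upSet {X : Type*} [PseudoMetricSpace X] (θ : ℝ) (F : Set X) : Set ℝ :=
  {s : ℝ | 0 ≤ s ∧ ∀ ε > 0, ∃ δ₀ > 0, ∀ δ, 0 < δ → δ ≤ δ₀ → interCoverSum θ δ s ε F}

def lowSet {X : Type*} [PseudoMetricSpace X] (θ : ℝ) (F : Set X) : Set ℝ :=
  {s : ℝ | 0 ≤ s ∧ ∀ ε > 0, ∀ δ₀ > 0, ∃ δ, 0 < δ ∧ δ ≤ δ₀ ∧ interCoverSum θ δ s ε F}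

lemma upperInterDim_eq {X : Type*} [PseudoMetricSpace X] (θ : ℝ) (F : Set X) :
    upperInterDim θ F = sInf (upSet θ F) := rfl

lemma lowerInterDim_eq {X : Type*} [PseudoMetricSpace X] (θ : ℝ) (F : Set X) :
    lowerInterDim θ F = sInf (lowSet θ F) := rfl

lemma upSet_subset_lowSet {X : Type*} [PseudoMetricSpace X] {θ : ℝ} {F : Set X} :
    upSet θ F ⊆ lowSet θ F := by
  rintro s ⟨h0, h1⟩
  refine ⟨h0, fun ε hε δ₀' hδ₀' => ?_⟩
  obtain ⟨δ₀, hδ₀, h2⟩ := h1 ε hε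
  exact ⟨min δ₀ δ₀', lt_min hδ₀ hδ₀', min_le_right _ _,
    h2 _ (lt_min hδ₀ hδ₀') (min_le_left _ _)⟩

lemma interCoverSum_mono {X : Type*} [PseudoMetricSpace X] {θ δ s s' ε : ℝ} {F : Set X}
    (hδ1 : δ ≤ 1) (hss' : s ≤ s') (h : interCoverSum θ δ s ε F) :
    interCoverSum θ δ s' ε F := by
  obtain ⟨𝒰, h1, h2, h3, h4⟩ := h
  refine ⟨𝒰, h1, h2, h3, le_trans (ENNReal.tsum_le_tsum fun U => ?_) h4⟩
  apply ENNReal.rpow_le_rpow_of_exponent_ge _ hss'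
  calc EMetric.diam (U : Set X) ≤ ENNReal.ofReal δ := (h3 U U.2).1
    _ ≤ ENNReal.ofReal 1 := ENNReal.ofReal_le_ofReal hδ1
    _ = 1 := ENNReal.ofReal_one

lemma upSet_mono {X : Type*} [PseudoMetricSpace X] {θ : ℝ} {F : Set X} {s s' : ℝ}
    (hss' : s ≤ s') (h : s ∈ upSet θ F) : s' ∈ upSet θ F := by
  obtain ⟨h0, h1⟩ := h
  refine ⟨h0.trans hss', fun ε hε => ?_⟩
  obtain ⟨δ₀, hδ₀, h2⟩ := h1 ε hε
  refine ⟨min δ₀ 1, lt_min hδ₀ one_pos, fun δ hδ hδle => ?_⟩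
  exact interCoverSum_mono (hδle.trans (min_le_right _ _)) hss'
    (h2 δ hδ (hδle.trans (min_le_left _ _)))

lemma lowSet_mono {X : Type*} [PseudoMetricSpace X] {θ : ℝ} {F : Set X} {s s' : ℝ}
    (hss' : s ≤ s') (h : s ∈ lowSet θ F) : s' ∈ lowSet θ F := by
  obtain ⟨h0, h1⟩ := h
  refine ⟨h0.trans hss', fun ε hε δ₀' hδ₀' => ?_⟩
  obtain ⟨δ, hδ, hδle, h3⟩ := h1 ε hε (min δ₀' 1) (lt_min hδ₀' one_pos)
  exact ⟨δ, hδ, hδle.trans (min_le_left _ _),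
    interCoverSum_mono (hδle.trans (min_le_right _ _)) hss' h3⟩

lemma coord_dist_le {n : ℕ} (x y : EuclideanSpace ℝ (Fin n)) (i : Fin n) :
    dist (x i) (y i) ≤ dist x y := by
  rw [EuclideanSpace.dist_eq]
  calc dist (x i) (y i) = Real.sqrt (dist (x i) (y i) ^ 2) := by
        rw [Real.sqrt_sq dist_nonneg]
    _ ≤ _ := by
        apply Real.sqrt_le_sqrt
        exact Finset.single_le_sum (f := fun j => dist (x j) (y j) ^ 2)
          (fun j _ => sq_nonneg _) (Finset.mem_univ i)

lemma euclid_cover (n : ℕ) :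
    ∃ C : ℝ, 1 ≤ C ∧ ∀ (U : Set (EuclideanSpace ℝ (Fin n))) (r R : ℝ), 0 < r → r ≤ R →
      Bornology.IsBounded U → Metric.diam U ≤ R →
      ∃ t : Finset (EuclideanSpace ℝ (Fin n)),
        (t.card : ℝ) ≤ C * (R / r) ^ n ∧ U ⊆ ⋃ x ∈ t, Metric.closedBall x (r / 2) := by
  have hsq := Real.sqrt_nonneg (n : ℝ)
  refine ⟨(4 * Real.sqrt n + 9) ^ n, one_le_pow₀ (by nlinarith), ?_⟩
  intro U r R hr hrR hUb hUd
  classical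
  have hR : 0 < R := lt_of_lt_of_le hr hrR
  rcases U.eq_empty_or_nonempty with rfl | ⟨x₀, hx₀⟩
  · refine ⟨∅, ?_, by simp⟩
    simp only [Finset.card_empty, Nat.cast_zero]
    positivity
  have hRr : 1 ≤ R / r := (one_le_div hr).2 hrR
  set a : ℝ := r / (2 * (Real.sqrt n + 1)) with ha
  have ha0 : 0 < a := by positivity
  set m : ℕ := ⌈R / a⌉₊ + 1 with hm
  have hRam : R / a ≤ m := by
    have := Nat.le_ceil (R / a)
    push_cast [hm]; linarith
  have hmub : (m : ℝ) ≤ R / a + 2 := by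
    have := (Nat.ceil_lt_add_one (div_nonneg hR.le ha0.le)).le
    push_cast [hm]; linarith
  have hRa : R / a = 2 * (Real.sqrt n + 1) * (R / r) := by
    rw [ha]; field_simp
  set ctr : (Fin n → ℤ) → EuclideanSpace ℝ (Fin n) :=
    fun k => WithLp.toLp 2 (fun i => a * k i + a / 2 : Fin n → ℝ) with hctr
  set T : Finset (Fin n → ℤ) :=
    Fintype.piFinset (fun i => Finset.Icc (⌊x₀ i / a⌋ - m) (⌊x₀ i / a⌋ + m)) with hT
  refine ⟨T.image ctr, ?_, ?_⟩
  · calc ((T.image ctr).card : ℝ) ≤ T.card := by exact_mod_cast Finset.card_image_le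
      _ = ((2 * m + 1 : ℕ) : ℝ) ^ n := by
          rw [hT, Fintype.card_piFinset]
          have hcard : ∀ i : Fin n,
              (Finset.Icc (⌊x₀ i / a⌋ - (m : ℤ)) (⌊x₀ i / a⌋ + m)).card = 2 * m + 1 := by
            intro i
            rw [Int.card_Icc]
            omega
          rw [Finset.prod_congr rfl (fun i _ => hcard i), Finset.prod_const, Finset.card_univ,
            Fintype.card_fin]
          norm_cast
      _ ≤ ((4 * Real.sqrt n + 9) * (R / r)) ^ n := by
          apply pow_le_pow_left₀ (by positivity)
          have h5 : (⌈R / a⌉₊ : ℝ) ≤ R / a + 1 := (Nat.ceil_lt_add_one (div_nonneg hR.le ha0.le)).le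
          push_cast
          linarith [hRa, hRr]
      _ = _ := by rw [mul_pow]
  · intro x hx
    have hdist : ∀ i, dist (x i) (x₀ i) ≤ R :=
      fun i => (coord_dist_le x x₀ i).trans ((dist_le_diam_of_mem hUb hx hx₀).trans hUd)
    set k : Fin n → ℤ := fun i => ⌊x i / a⌋ with hk
    have hkT : k ∈ T := by
      rw [hT, Fintype.mem_piFinset]
      intro i
      rw [Finset.mem_Icc]
      have h1 : x₀ i - R ≤ x i ∧ x i ≤ x₀ i + R := by
        have := hdist i; rw [Real.dist_eq, abs_le] at this; constructor <;> linarith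
      have hfl : (⌊x₀ i / a⌋ : ℝ) ≤ x₀ i / a := Int.floor_le _
      have hfl2 : x₀ i / a < ⌊x₀ i / a⌋ + 1 := Int.lt_floor_add_one _
      have hRam' : R / a ≤ (⌈R / a⌉₊ : ℝ) + 1 := by linarith [Nat.le_ceil (R / a)]
      have hmr : (m : ℝ) = (⌈R / a⌉₊ : ℝ) + 1 := by push_cast [hm]; ring
      constructor
      · apply Int.le_floor.2
        push_cast
        have h2 : (x₀ i - R) / a ≤ x i / a := by gcongr; exact h1.1
        rw [sub_div] at h2
        linarith [hmr, hRam']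
      · have hup : k i < ⌊x₀ i / a⌋ + (m : ℤ) + 1 := by
          simp only [hk]
          rw [Int.floor_lt]
          push_cast
          have h2 : x i / a ≤ (x₀ i + R) / a := by gcongr; exact h1.2
          rw [add_div] at h2
          linarith [hmr, hRam']
        omega
    refine mem_iUnion₂.2 ⟨ctr k, Finset.mem_image_of_mem _ hkT, ?_⟩
    rw [Metric.mem_closedBall, EuclideanSpace.dist_eq]
    have hcoord : ∀ i, dist (x i) (ctr k i) ^ 2 ≤ (a / 2) ^ 2 := by
      intro i
      have h1 : (k i : ℝ) ≤ x i / a := Int.floor_le _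
      have h2 : x i / a < k i + 1 := Int.lt_floor_add_one _
      have h1' : a * (k i : ℝ) ≤ x i := by
        have := mul_le_mul_of_nonneg_left h1 ha0.le
        rwa [mul_div_cancel₀ _ (ne_of_gt ha0)] at this
      have h2' : x i < a * ((k i : ℝ) + 1) := by
        have := mul_lt_mul_of_pos_left h2 ha0
        rwa [mul_div_cancel₀ _ (ne_of_gt ha0)] at this
      have hb : dist (x i) (ctr k i) ≤ a / 2 := by
        have hc : ctr k i = a * (k i : ℝ) + a / 2 := rfl
        rw [hc, Real.dist_eq, abs_le]
        constructor <;> nlinarith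
      exact pow_le_pow_left₀ dist_nonneg hb 2
    calc Real.sqrt (∑ i, dist (x i) (ctr k i) ^ 2) ≤ Real.sqrt (n * (a / 2) ^ 2) := by
          apply Real.sqrt_le_sqrt
          calc _ ≤ ∑ _i : Fin n, (a / 2) ^ 2 := Finset.sum_le_sum (fun i _ => hcoord i)
            _ = n * (a / 2) ^ 2 := by rw [Finset.sum_const, Finset.card_univ, Fintype.card_fin,
                  nsmul_eq_mul]
      _ ≤ r / 2 := by
          rw [Real.sqrt_mul (by positivity), Real.sqrt_sq (by positivity), ha]
          rw [div_div, ← mul_div_assoc]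
          rw [div_le_div_iff₀ (by positivity) (by norm_num)]
          nlinarith [mul_nonneg hsq hr.le]

lemma ball_diam_le {n : ℕ} (x : EuclideanSpace ℝ (Fin n)) {δ : ℝ} :
    EMetric.diam (Metric.closedBall x (δ / 2)) ≤ ENNReal.ofReal δ := by
  apply EMetric.diam_le
  intro p hp q hq
  rw [edist_dist]
  apply ENNReal.ofReal_le_ofReal
  calc dist p q ≤ dist p x + dist q x := dist_triangle_right p q x
    _ ≤ δ / 2 + δ / 2 := add_le_add hp hq
    _ = δ := by ring

lemma ball_diam_ge {n : ℕ} (hn : 0 < n) (x : EuclideanSpace ℝ (Fin n)) {δ : ℝ} (hδ : 0 ≤ δ) :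
    ENNReal.ofReal δ ≤ EMetric.diam (Metric.closedBall x (δ / 2)) := by
  obtain ⟨i0⟩ : Nonempty (Fin n) := ⟨⟨0, hn⟩⟩
  set v : EuclideanSpace ℝ (Fin n) := EuclideanSpace.single i0 (δ / 2) with hv
  have hvnorm : ‖v‖ = δ / 2 := by
    rw [hv, EuclideanSpace.norm_single, Real.norm_eq_abs, abs_of_nonneg (by positivity)]
  have hmem1 : x + v ∈ Metric.closedBall x (δ / 2) := by
    rw [Metric.mem_closedBall, dist_eq_norm, add_sub_cancel_left, hvnorm]
  have hmem2 : x - v ∈ Metric.closedBall x (δ / 2) := by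
    rw [Metric.mem_closedBall, dist_eq_norm, sub_sub_cancel_left, norm_neg, hvnorm]
  have hdist2 : dist (x + v) (x - v) = δ := by
    rw [dist_eq_norm, show x + v - (x - v) = (2 : ℝ) • v by module, norm_smul, hvnorm]
    simp
    ring
  calc ENNReal.ofReal δ = edist (x + v) (x - v) := by rw [edist_dist, hdist2]
    _ ≤ _ := EMetric.edist_le_diam_of_mem hmem1 hmem2

lemma ballsum (n : ℕ) (hn : 0 < n) {θ δ ε C R₀ : ℝ} (hθ : 0 < θ) (hθ1 : θ ≤ 1)
    (hδ : 0 < δ) (hδ1 : δ ≤ 1) (hR₀ : 1 ≤ R₀) (hC : 1 ≤ C)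
    (hcov : ∀ (U : Set (EuclideanSpace ℝ (Fin n))) (r R : ℝ), 0 < r → r ≤ R →
      Bornology.IsBounded U → Metric.diam U ≤ R →
      ∃ t : Finset (EuclideanSpace ℝ (Fin n)),
        (t.card : ℝ) ≤ C * (R / r) ^ n ∧ U ⊆ ⋃ x ∈ t, Metric.closedBall x (r / 2))
    {F : Set (EuclideanSpace ℝ (Fin n))} (hF : Bornology.IsBounded F)
    (hdF : Metric.diam F ≤ R₀) {η : ℝ} (hη : 0 < η)
    (hε : C * R₀ ^ n * δ ^ η ≤ ε) :
    interCoverSum θ δ ((n : ℝ) + η) ε F := by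
  classical
  obtain ⟨tf, htc, htcov⟩ := hcov F δ R₀ hδ (hδ1.trans hR₀) hF hdF
  have hδθ : δ ^ (1 / θ) ≤ δ := by
    calc δ ^ (1 / θ) ≤ δ ^ (1 : ℝ) :=
          Real.rpow_le_rpow_of_exponent_ge hδ hδ1 (one_le_one_div hθ hθ1)
      _ = δ := Real.rpow_one δ
  have hnη : (0:ℝ) ≤ (n : ℝ) + η := by positivity
  refine ⟨↑(tf.image fun x => Metric.closedBall x (δ / 2)),
    (tf.image _).countable_toSet, ?_, ?_, ?_⟩
  · rw [Finset.coe_image, sUnion_image]; exact htcov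
  · intro V hV
    rw [Finset.mem_coe, Finset.mem_image] at hV
    obtain ⟨x, -, rfl⟩ := hV
    refine ⟨ball_diam_le x, fun _ => ?_⟩
    exact le_trans (ENNReal.ofReal_le_ofReal hδθ) (ball_diam_ge hn x hδ.le)
  · rw [Finset.tsum_subtype' (tf.image fun x => Metric.closedBall x (δ / 2))
      (fun V => EMetric.diam V ^ ((n : ℝ) + η))]
    calc ∑ V ∈ tf.image (fun x => Metric.closedBall x (δ / 2)),
            EMetric.diam V ^ ((n : ℝ) + η)
        ≤ (tf.image (fun x => Metric.closedBall x (δ / 2))).card •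
            ENNReal.ofReal (δ ^ ((n : ℝ) + η)) := by
          apply Finset.sum_le_card_nsmul
          intro V hV
          obtain ⟨x, -, rfl⟩ := Finset.mem_image.1 hV
          calc EMetric.diam (Metric.closedBall x (δ / 2)) ^ ((n : ℝ) + η)
              ≤ ENNReal.ofReal δ ^ ((n : ℝ) + η) :=
                ENNReal.rpow_le_rpow (ball_diam_le x) hnη
            _ = ENNReal.ofReal (δ ^ ((n : ℝ) + η)) := ENNReal.ofReal_rpow_of_pos hδ
      _ ≤ (tf.card : ℝ≥0∞) * ENNReal.ofReal (δ ^ ((n : ℝ) + η)) := by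
          rw [nsmul_eq_mul]
          apply mul_le_mul_left
          exact_mod_cast Nat.cast_le.2 Finset.card_image_le
      _ ≤ ENNReal.ofReal (C * (R₀ / δ) ^ n) * ENNReal.ofReal (δ ^ ((n : ℝ) + η)) := by
          apply mul_le_mul_left
          rw [show ((tf.card : ℝ≥0∞)) = ENNReal.ofReal (tf.card : ℝ) by
            rw [ENNReal.ofReal_natCast]]
          exact ENNReal.ofReal_le_ofReal htc
      _ = ENNReal.ofReal (C * ((R₀ / δ) ^ n * δ ^ ((n : ℝ) + η))) := by
          rw [← ENNReal.ofReal_mul (by positivity), mul_assoc]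
      _ ≤ ENNReal.ofReal ε := by
          apply ENNReal.ofReal_le_ofReal
          have e : ((R₀ / δ) ^ n : ℝ) * δ ^ ((n : ℝ) + η) = R₀ ^ n * δ ^ η := by
            rw [Real.rpow_add hδ, Real.rpow_natCast, div_pow]
            field_simp
          calc C * ((R₀ / δ) ^ n * δ ^ ((n : ℝ) + η)) = C * R₀ ^ n * δ ^ η := by
                rw [e]; ring
            _ ≤ ε := hε

set_option maxHeartbeats 1000000 in
lemma transfer {n : ℕ} (hn : 0 < n) {C : ℝ} (hC : 1 ≤ C)
    (hcov : ∀ (U : Set (EuclideanSpace ℝ (Fin n))) (r R : ℝ), 0 < r → r ≤ R →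
      Bornology.IsBounded U → Metric.diam U ≤ R →
      ∃ t : Finset (EuclideanSpace ℝ (Fin n)),
        (t.card : ℝ) ≤ C * (R / r) ^ n ∧ U ⊆ ⋃ x ∈ t, Metric.closedBall x (r / 2))
    {θ φ s δ ε : ℝ} (hθ : 0 < θ) (hθφ : θ < φ) (hφ : φ ≤ 1)
    (hs0 : 0 ≤ s) (hsn : s ≤ n) (hδ : 0 < δ) (hδ1 : δ ≤ 1) (hε : 0 < ε)
    {F : Set (EuclideanSpace ℝ (Fin n))}
    (h : interCoverSum θ (δ ^ (θ / φ)) s ε F) :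
    interCoverSum φ δ (θ / φ * s + (1 - θ / φ) * n) (C * ε) F := by
  classical
  have hφ0 : 0 < φ := hθ.trans hθφ
  have hc0 : 0 < θ / φ := div_pos hθ hφ0
  have hc1 : θ / φ < 1 := (div_lt_one hφ0).2 hθφ
  set c : ℝ := θ / φ with hc
  set t : ℝ := c * s + (1 - c) * n with ht
  set ρ : ℝ := δ ^ c with hρ
  have hρ0 : 0 < ρ := Real.rpow_pos_of_pos hδ _
  have hρ1 : ρ ≤ 1 := Real.rpow_le_one hδ.le hδ1 hc0.le
  have hδρ : δ ≤ ρ := by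
    calc δ = δ ^ (1 : ℝ) := (Real.rpow_one δ).symm
      _ ≤ δ ^ c := Real.rpow_le_rpow_of_exponent_ge hδ hδ1 hc1.le
  have hρθ : ρ ^ (1 / θ) = δ ^ (1 / φ) := by
    rw [hρ, ← Real.rpow_mul hδ.le, hc]
    congr 1
    field_simp
  have hδφδ : δ ^ (1 / φ) ≤ δ := by
    calc δ ^ (1 / φ) ≤ δ ^ (1 : ℝ) :=
          Real.rpow_le_rpow_of_exponent_ge hδ hδ1 (one_le_one_div hφ0 hφ)
      _ = δ := Real.rpow_one δ
  have hts : s ≤ t := by nlinarith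
  have ht0 : 0 ≤ t := by nlinarith [hc0.le, hc1.le]
  obtain ⟨𝒰, h𝒰c, h𝒰cov, h𝒰d, h𝒰sum⟩ := h
  -- per-element covers
  have key : ∀ U : 𝒰, ∃ 𝒱 : Set (Set (EuclideanSpace ℝ (Fin n))), 𝒱.Countable ∧
      (U : Set _) ⊆ ⋃₀ 𝒱 ∧
      (∀ V ∈ 𝒱, EMetric.diam V ≤ ENNReal.ofReal δ ∧
        ENNReal.ofReal (δ ^ (1 / φ)) ≤ EMetric.diam V) ∧
      ∑' V : 𝒱, EMetric.diam (V : Set (EuclideanSpace ℝ (Fin n))) ^ t ≤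
        ENNReal.ofReal C * EMetric.diam (U : Set (EuclideanSpace ℝ (Fin n))) ^ s := by
    rintro ⟨U, hU⟩
    obtain ⟨hUd, hUl⟩ := h𝒰d U hU
    have hUl' : ENNReal.ofReal (δ ^ (1 / φ)) ≤ EMetric.diam U := by
      rw [← hρθ]; exact hUl (ne_of_gt hθ)
    have hC0' : (1 : ℝ≥0∞) ≤ ENNReal.ofReal C := by
      rw [← ENNReal.ofReal_one]; exact ENNReal.ofReal_le_ofReal hC
    by_cases hcase : EMetric.diam U ≤ ENNReal.ofReal δ
    · refine ⟨{U}, countable_singleton _, by simp, ?_, ?_⟩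
      · rintro V rfl
        exact ⟨hcase, hUl'⟩
      · rw [tsum_singleton (α := ℝ≥0∞) U (fun V => EMetric.diam V ^ t)]
        calc EMetric.diam U ^ t ≤ EMetric.diam U ^ s := by
              apply ENNReal.rpow_le_rpow_of_exponent_ge _ hts
              calc EMetric.diam U ≤ ENNReal.ofReal δ := hcase
                _ ≤ ENNReal.ofReal 1 := ENNReal.ofReal_le_ofReal hδ1
                _ = 1 := ENNReal.ofReal_one
          _ ≤ ENNReal.ofReal C * EMetric.diam U ^ s := le_mul_of_one_le_left zero_le hC0'
    · -- large set: subdivide into balls of radius δ/2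
      push_neg at hcase
      have hUne : EMetric.diam U ≠ ⊤ :=
        ne_top_of_le_ne_top ENNReal.ofReal_ne_top hUd
      have hUb : Bornology.IsBounded U := Metric.isBounded_iff_ediam_ne_top.2 hUne
      set dU : ℝ := Metric.diam U with hdU
      have hdU0 : δ < dU := by
        have := ENNReal.toReal_lt_toReal ENNReal.ofReal_ne_top hUne |>.2 hcase
        rwa [ENNReal.toReal_ofReal hδ.le] at this
      have hdUρ : dU ≤ ρ := by
        have := ENNReal.toReal_mono ENNReal.ofReal_ne_top hUd
        rwa [ENNReal.toReal_ofReal hρ0.le] at this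
      have hediam : EMetric.diam U = ENNReal.ofReal dU := by
        rw [hdU, Metric.diam]; exact (ENNReal.ofReal_toReal hUne).symm
      obtain ⟨tf, htf_card, htf_cov⟩ := hcov U δ dU hδ hdU0.le hUb le_rfl
      refine ⟨↑(tf.image fun x => Metric.closedBall x (δ / 2)),
        (tf.image _).countable_toSet, ?_, ?_, ?_⟩
      · rw [Finset.coe_image, sUnion_image]; exact htf_cov
      · intro V hV
        rw [Finset.mem_coe, Finset.mem_image] at hV
        obtain ⟨x, -, rfl⟩ := hV
        constructor
        · apply EMetric.diam_le
          intro p hp q hq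
          rw [edist_dist]
          apply ENNReal.ofReal_le_ofReal
          calc dist p q ≤ dist p x + dist q x := dist_triangle_right p q x
            _ ≤ δ / 2 + δ / 2 := add_le_add hp hq
            _ = δ := by ring
        · -- lower bound via two antipodal points
          obtain ⟨i0⟩ : Nonempty (Fin n) := ⟨⟨0, hn⟩⟩
          set v : EuclideanSpace ℝ (Fin n) := EuclideanSpace.single i0 (δ / 2) with hv
          have hvnorm : ‖v‖ = δ / 2 := by
            rw [hv, EuclideanSpace.norm_single, Real.norm_eq_abs, abs_of_nonneg (by positivity)]
          have hmem1 : x + v ∈ Metric.closedBall x (δ / 2) := by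
            rw [Metric.mem_closedBall, dist_eq_norm, add_sub_cancel_left, hvnorm]
          have hmem2 : x - v ∈ Metric.closedBall x (δ / 2) := by
            rw [Metric.mem_closedBall, dist_eq_norm, sub_sub_cancel_left, norm_neg, hvnorm]
          have hdist2 : dist (x + v) (x - v) = δ := by
            rw [dist_eq_norm, show x + v - (x - v) = (2 : ℝ) • v by module, norm_smul]
            rw [hvnorm]
            simp
            ring
          calc ENNReal.ofReal (δ ^ (1 / φ)) ≤ ENNReal.ofReal δ :=
                ENNReal.ofReal_le_ofReal hδφδ
            _ = edist (x + v) (x - v) := by rw [edist_dist, hdist2]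
            _ ≤ _ := EMetric.edist_le_diam_of_mem hmem1 hmem2
      · -- sum bound
        have hball : ∀ x : EuclideanSpace ℝ (Fin n),
            EMetric.diam (Metric.closedBall x (δ / 2)) ^ t ≤ ENNReal.ofReal (δ ^ t) := by
          intro x
          have h1 : EMetric.diam (Metric.closedBall x (δ / 2)) ≤ ENNReal.ofReal δ := by
            apply EMetric.diam_le
            intro p hp q hq
            rw [edist_dist]
            apply ENNReal.ofReal_le_ofReal
            calc dist p q ≤ dist p x + dist q x := dist_triangle_right p q x
              _ ≤ δ / 2 + δ / 2 := add_le_add hp hq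
              _ = δ := by ring
          calc EMetric.diam (Metric.closedBall x (δ / 2)) ^ t ≤ ENNReal.ofReal δ ^ t :=
                ENNReal.rpow_le_rpow h1 ht0
            _ = ENNReal.ofReal (δ ^ t) := ENNReal.ofReal_rpow_of_pos hδ
        rw [Finset.tsum_subtype' (tf.image fun x => Metric.closedBall x (δ / 2))
          (fun V => EMetric.diam V ^ t)]
        calc ∑ V ∈ tf.image (fun x => Metric.closedBall x (δ / 2)),
                EMetric.diam V ^ t
            = ∑ V ∈ tf.image (fun x => Metric.closedBall x (δ / 2)),
                EMetric.diam V ^ t := rfl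
          _ ≤ (tf.image (fun x => Metric.closedBall x (δ / 2))).card •
                ENNReal.ofReal (δ ^ t) := by
              apply Finset.sum_le_card_nsmul
              rintro V hV
              obtain ⟨x, -, rfl⟩ := Finset.mem_image.1 hV
              exact hball x
          _ ≤ (tf.card : ℝ≥0∞) * ENNReal.ofReal (δ ^ t) := by
              rw [nsmul_eq_mul]
              apply mul_le_mul_left
              exact_mod_cast Nat.cast_le.2 Finset.card_image_le
          _ ≤ ENNReal.ofReal (C * (dU / δ) ^ n) * ENNReal.ofReal (δ ^ t) := by
              apply mul_le_mul_left
              rw [show ((tf.card : ℝ≥0∞)) = ENNReal.ofReal (tf.card : ℝ) by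
                rw [ENNReal.ofReal_natCast]]
              exact ENNReal.ofReal_le_ofReal htf_card
          _ = ENNReal.ofReal (C * ((dU / δ) ^ n * δ ^ t)) := by
              rw [← ENNReal.ofReal_mul (by positivity), mul_assoc]
          _ ≤ ENNReal.ofReal (C * dU ^ s) := by
              apply ENNReal.ofReal_le_ofReal
              apply mul_le_mul_of_nonneg_left _ (by linarith)
              -- key real inequality
              have hdU0' : 0 < dU := hδ.trans hdU0
              have e1 : (dU / δ) ^ n * δ ^ t = dU ^ (n : ℝ) * δ ^ (t - n) := by
                rw [div_pow, ← Real.rpow_natCast dU n, ← Real.rpow_natCast δ n,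
                  div_mul_eq_mul_div, div_eq_iff (by positivity), mul_assoc,
                  ← Real.rpow_add hδ]
                ring_nf
              rw [e1]
              have e2 : dU ^ (n : ℝ) = dU ^ s * dU ^ ((n : ℝ) - s) := by
                rw [← Real.rpow_add hdU0']; ring_nf
              rw [e2, mul_assoc]
              have e3 : dU ^ ((n : ℝ) - s) ≤ ρ ^ ((n : ℝ) - s) :=
                Real.rpow_le_rpow hdU0'.le hdUρ (by linarith)
              have e4 : ρ ^ ((n : ℝ) - s) * δ ^ (t - n) = 1 := by
                rw [hρ, ← Real.rpow_mul hδ.le, ← Real.rpow_add hδ]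
                rw [show c * ((n : ℝ) - s) + (t - n) = 0 by rw [ht]; ring]
                exact Real.rpow_zero δ
              calc dU ^ s * (dU ^ ((n : ℝ) - s) * δ ^ (t - n))
                  ≤ dU ^ s * (ρ ^ ((n : ℝ) - s) * δ ^ (t - n)) := by
                    apply mul_le_mul_of_nonneg_left _ (by positivity)
                    apply mul_le_mul_of_nonneg_right e3 (by positivity)
                _ = dU ^ s := by rw [e4, mul_one]
          _ = ENNReal.ofReal C * EMetric.diam U ^ s := by
              rw [hediam, ENNReal.ofReal_rpow_of_pos (hδ.trans hdU0),
                ENNReal.ofReal_mul (by linarith)]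
  choose pieces hPc hPcov hPcond hPsum using key
  have : Countable ↥𝒰 := h𝒰c.to_subtype
  refine ⟨⋃ U : 𝒰, pieces U, countable_iUnion (fun U => hPc U), ?_, ?_, ?_⟩
  · intro x hx
    obtain ⟨U, hU, hxU⟩ := h𝒰cov hx
    obtain ⟨V, hV, hxV⟩ := hPcov ⟨U, hU⟩ hxU
    exact ⟨V, mem_iUnion.2 ⟨⟨U, hU⟩, hV⟩, hxV⟩
  · intro V hV
    obtain ⟨U, hVU⟩ := mem_iUnion.1 hV
    obtain ⟨h1, h2⟩ := hPcond U V hVU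
    exact ⟨h1, fun _ => h2⟩
  · calc ∑' V : ↥(⋃ U : 𝒰, pieces U),
          EMetric.diam (V : Set (EuclideanSpace ℝ (Fin n))) ^ t
        ≤ ∑' U : 𝒰, ∑' V : ↥(pieces U),
            EMetric.diam (V : Set (EuclideanSpace ℝ (Fin n))) ^ t :=
          ENNReal.tsum_iUnion_le_tsum
            (fun V : Set (EuclideanSpace ℝ (Fin n)) => EMetric.diam V ^ t) pieces
      _ ≤ ∑' U : 𝒰, ENNReal.ofReal C *
            EMetric.diam (U : Set (EuclideanSpace ℝ (Fin n))) ^ s :=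
          ENNReal.tsum_le_tsum (fun U => hPsum U)
      _ = ENNReal.ofReal C * ∑' U : 𝒰,
            EMetric.diam (U : Set (EuclideanSpace ℝ (Fin n))) ^ s :=
          ENNReal.tsum_mul_left
      _ ≤ ENNReal.ofReal C * ENNReal.ofReal ε := mul_le_mul_right h𝒰sum _
      _ = ENNReal.ofReal (C * ε) := (ENNReal.ofReal_mul (by linarith)).symm

-- membership of exponents above n
lemma big_mem_upSet {n : ℕ} (hn : 0 < n) {C : ℝ} (hC : 1 ≤ C)
    (hcov : ∀ (U : Set (EuclideanSpace ℝ (Fin n))) (r R : ℝ), 0 < r → r ≤ R →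
      Bornology.IsBounded U → Metric.diam U ≤ R →
      ∃ t : Finset (EuclideanSpace ℝ (Fin n)),
        (t.card : ℝ) ≤ C * (R / r) ^ n ∧ U ⊆ ⋃ x ∈ t, Metric.closedBall x (r / 2))
    {θ : ℝ} (hθ : 0 < θ) (hθ1 : θ ≤ 1)
    {F : Set (EuclideanSpace ℝ (Fin n))} (hF : Bornology.IsBounded F)
    {η : ℝ} (hη : 0 < η) : ((n : ℝ) + η) ∈ upSet θ F := by
  refine ⟨by positivity, fun ε hε => ?_⟩
  set R₀ : ℝ := max (Metric.diam F) 1 with hR₀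
  have hR₀1 : 1 ≤ R₀ := le_max_right _ _
  have hdF : Metric.diam F ≤ R₀ := le_max_left _ _
  set A : ℝ := C * R₀ ^ n with hA
  have hA0 : 0 < A := by positivity
  set δ₀ : ℝ := min 1 ((ε / A) ^ (1 / η)) with hδ₀
  have hδ₀0 : 0 < δ₀ := lt_min one_pos (Real.rpow_pos_of_pos (by positivity) _)
  refine ⟨δ₀, hδ₀0, fun δ hδ hδle => ?_⟩
  have hδ1 : δ ≤ 1 := hδle.trans (min_le_left _ _)
  apply ballsum n hn hθ hθ1 hδ hδ1 hR₀1 hC hcov hF hdF hη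
  have h1 : δ ^ η ≤ ε / A := by
    calc δ ^ η ≤ ((ε / A) ^ (1 / η)) ^ η :=
          Real.rpow_le_rpow hδ.le (hδle.trans (min_le_right _ _)) hη.le
      _ = ε / A := by
          rw [← Real.rpow_mul (by positivity), one_div_mul_cancel hη.ne', Real.rpow_one]
  calc C * R₀ ^ n * δ ^ η = A * δ ^ η := by rw [hA]
    _ ≤ A * (ε / A) := mul_le_mul_of_nonneg_left h1 hA0.le
    _ = ε := by field_simp

lemma upSet_nonneg_mem {X : Type*} [PseudoMetricSpace X] {θ : ℝ} {F : Set X} :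
    BddBelow (upSet θ F) := ⟨0, fun s hs => hs.1⟩

lemma lowSet_nonneg_mem {X : Type*} [PseudoMetricSpace X] {θ : ℝ} {F : Set X} :
    BddBelow (lowSet θ F) := ⟨0, fun s hs => hs.1⟩

-- the transfer at the level of the defining sets: upper version
lemma transfer_upSet {n : ℕ} (hn : 0 < n) {C : ℝ} (hC : 1 ≤ C)
    (hcov : ∀ (U : Set (EuclideanSpace ℝ (Fin n))) (r R : ℝ), 0 < r → r ≤ R →
      Bornology.IsBounded U → Metric.diam U ≤ R →
      ∃ t : Finset (EuclideanSpace ℝ (Fin n)),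
        (t.card : ℝ) ≤ C * (R / r) ^ n ∧ U ⊆ ⋃ x ∈ t, Metric.closedBall x (r / 2))
    {θ φ s : ℝ} (hθ : 0 < θ) (hθφ : θ < φ) (hφ : φ ≤ 1)
    {F : Set (EuclideanSpace ℝ (Fin n))} (hs : s ∈ upSet θ F) (hsn : s ≤ n) :
    (θ / φ * s + (1 - θ / φ) * n) ∈ upSet φ F := by
  have hφ0 : 0 < φ := hθ.trans hθφ
  have hc0 : 0 < θ / φ := div_pos hθ hφ0
  have hc1 : θ / φ < 1 := (div_lt_one hφ0).2 hθφ
  obtain ⟨hs0, h1⟩ := hs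
  refine ⟨by nlinarith [Nat.cast_nonneg (α := ℝ) n], fun ε hε => ?_⟩
  have hC0 : (0 : ℝ) < C := lt_of_lt_of_le one_pos hC
  have hεC : 0 < ε / C := by positivity
  obtain ⟨ρ₀, hρ₀, h2⟩ := h1 (ε / C) hεC
  set ρ₁ : ℝ := min ρ₀ 1 with hρ₁
  have hρ₁0 : 0 < ρ₁ := lt_min hρ₀ one_pos
  have hρ₁1 : ρ₁ ≤ 1 := min_le_right _ _
  refine ⟨ρ₁ ^ (φ / θ), Real.rpow_pos_of_pos hρ₁0 _, fun δ hδ hδle => ?_⟩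
  have hδ1 : δ ≤ 1 :=
    hδle.trans (Real.rpow_le_one hρ₁0.le hρ₁1 (by positivity))
  have hδc : δ ^ (θ / φ) ≤ ρ₁ := by
    calc δ ^ (θ / φ) ≤ (ρ₁ ^ (φ / θ)) ^ (θ / φ) :=
          Real.rpow_le_rpow hδ.le hδle hc0.le
      _ = ρ₁ := by
          rw [← Real.rpow_mul hρ₁0.le]
          rw [show φ / θ * (θ / φ) = 1 by field_simp]
          exact Real.rpow_one _
  have h3 := h2 (δ ^ (θ / φ)) (Real.rpow_pos_of_pos hδ _) (hδc.trans (min_le_left _ _))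
  have h4 := transfer hn hC hcov hθ hθφ hφ hs0 hsn hδ hδ1 hεC h3
  have hCε : C * (ε / C) = ε := by field_simp
  rwa [hCε] at h4

-- lower version
lemma transfer_lowSet {n : ℕ} (hn : 0 < n) {C : ℝ} (hC : 1 ≤ C)
    (hcov : ∀ (U : Set (EuclideanSpace ℝ (Fin n))) (r R : ℝ), 0 < r → r ≤ R →
      Bornology.IsBounded U → Metric.diam U ≤ R →
      ∃ t : Finset (EuclideanSpace ℝ (Fin n)),
        (t.card : ℝ) ≤ C * (R / r) ^ n ∧ U ⊆ ⋃ x ∈ t, Metric.closedBall x (r / 2))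
    {θ φ s : ℝ} (hθ : 0 < θ) (hθφ : θ < φ) (hφ : φ ≤ 1)
    {F : Set (EuclideanSpace ℝ (Fin n))} (hs : s ∈ lowSet θ F) (hsn : s ≤ n) :
    (θ / φ * s + (1 - θ / φ) * n) ∈ lowSet φ F := by
  have hφ0 : 0 < φ := hθ.trans hθφ
  have hc0 : 0 < θ / φ := div_pos hθ hφ0
  have hc1 : θ / φ < 1 := (div_lt_one hφ0).2 hθφ
  obtain ⟨hs0, h1⟩ := hs
  refine ⟨by nlinarith [Nat.cast_nonneg (α := ℝ) n], fun ε hε δ₀' hδ₀' => ?_⟩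
  have hC0 : (0 : ℝ) < C := lt_of_lt_of_le one_pos hC
  have hεC : 0 < ε / C := by positivity
  set m₁ : ℝ := min δ₀' 1 with hm₁
  have hm₁0 : 0 < m₁ := lt_min hδ₀' one_pos
  have hm₁1 : m₁ ≤ 1 := min_le_right _ _
  obtain ⟨ρ, hρ, hρle, h3⟩ := h1 (ε / C) hεC (m₁ ^ (θ / φ))
    (Real.rpow_pos_of_pos hm₁0 _)
  set δ : ℝ := ρ ^ (φ / θ) with hδdef
  have hδ : 0 < δ := Real.rpow_pos_of_pos hρ _
  have hδm : δ ≤ m₁ := by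
    calc δ ≤ (m₁ ^ (θ / φ)) ^ (φ / θ) :=
          Real.rpow_le_rpow hρ.le hρle (by positivity)
      _ = m₁ := by
          rw [← Real.rpow_mul hm₁0.le]
          rw [show θ / φ * (φ / θ) = 1 by field_simp]
          exact Real.rpow_one _
  have hδ1 : δ ≤ 1 := hδm.trans hm₁1
  have hback : δ ^ (θ / φ) = ρ := by
    rw [hδdef, ← Real.rpow_mul hρ.le]
    rw [show φ / θ * (θ / φ) = 1 by field_simp]
    exact Real.rpow_one _
  rw [← hback] at h3
  have h4 := transfer hn hC hcov hθ hθφ hφ hs0 hsn hδ hδ1 hεC h3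
  have hCε : C * (ε / C) = ε := by field_simp
  rw [hCε] at h4
  exact ⟨δ, hδ, hδm.trans (min_le_left _ _), h4⟩

-- the n = 0 case
lemma dim_zero_case (θ : ℝ) (hθ : 0 < θ) (F : Set (EuclideanSpace ℝ (Fin 0))) :
    upperInterDim θ F = 0 ∧ lowerInterDim θ F = 0 := by
  haveI : Subsingleton (EuclideanSpace ℝ (Fin 0)) :=
    inferInstance
  rcases F.eq_empty_or_nonempty with rfl | ⟨x, hx⟩
  · have hics : ∀ δ s ε : ℝ, 0 < ε → interCoverSum θ δ s ε (∅ : Set (EuclideanSpace ℝ (Fin 0))) := by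
      intro δ s ε hε
      refine ⟨∅, countable_empty, by simp, by simp, ?_⟩
      rw [tsum_empty]
      exact zero_le
    have hU : upSet θ (∅ : Set (EuclideanSpace ℝ (Fin 0))) = Ici 0 := by
      ext s
      constructor
      · exact fun h => h.1
      · exact fun hs => ⟨hs, fun ε hε => ⟨1, one_pos, fun δ hδ _ => hics δ s ε hε⟩⟩
    have hL : lowSet θ (∅ : Set (EuclideanSpace ℝ (Fin 0))) = Ici 0 := by
      ext s
      constructor
      · exact fun h => h.1
      · exact fun hs => ⟨hs, fun ε hε δ₀ hδ₀ => ⟨δ₀, hδ₀, le_rfl, hics δ₀ s ε hε⟩⟩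
    rw [upperInterDim_eq, lowerInterDim_eq, hU, hL, csInf_Ici]
    exact ⟨rfl, rfl⟩
  · have himp : ∀ δ s ε : ℝ, 0 < δ → ¬ interCoverSum θ δ s ε F := by
      intro δ s ε hδ h
      obtain ⟨𝒰, -, hcov, hcond, -⟩ := h
      obtain ⟨U, hU, hxU⟩ := hcov hx
      have h1 := (hcond U hU).2 (ne_of_gt hθ)
      have h2 : EMetric.diam U = 0 := EMetric.diam_subsingleton (Set.subsingleton_of_subsingleton)
      rw [h2] at h1
      have h3 : (0 : ℝ≥0∞) < ENNReal.ofReal (δ ^ (1 / θ)) :=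
        ENNReal.ofReal_pos.2 (Real.rpow_pos_of_pos hδ _)
      exact absurd ((le_antisymm h1 zero_le)) (ne_of_gt h3)
    have hU : upSet θ F = ∅ := by
      ext s
      simp only [mem_empty_iff_false, iff_false]
      rintro ⟨-, h1⟩
      obtain ⟨δ₀, hδ₀, h2⟩ := h1 1 one_pos
      exact himp (min δ₀ 1) s 1 (lt_min hδ₀ one_pos)
        (h2 _ (lt_min hδ₀ one_pos) (min_le_left _ _))
    have hL : lowSet θ F = ∅ := by
      ext s
      simp only [mem_empty_iff_false, iff_false]
      rintro ⟨-, h1⟩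
      obtain ⟨δ, hδ, -, h3⟩ := h1 1 one_pos 1 one_pos
      exact himp δ s 1 hδ h3
    rw [upperInterDim_eq, lowerInterDim_eq, hU, hL, Real.sInf_empty]
    exact ⟨rfl, rfl⟩

theorem stmt7 (n : ℕ) (F : Set (EuclideanSpace ℝ (Fin n)))
    (hF : Bornology.IsBounded F) (θ φ : ℝ)
    (hθ : 0 < θ) (hθφ : θ < φ) (hφ : φ ≤ 1) :
    upperInterDim φ F ≤ upperInterDim θ F + (1 - θ / φ) * (n - upperInterDim θ F) ∧
    lowerInterDim φ F ≤ lowerInterDim θ F + (1 - θ / φ) * (n - lowerInterDim θ F) := by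
  have hφ0 : 0 < φ := hθ.trans hθφ
  have hθ1 : θ ≤ 1 := (le_of_lt hθφ).trans hφ
  have hc0 : 0 < θ / φ := div_pos hθ hφ0
  have hc1 : θ / φ < 1 := (div_lt_one hφ0).2 hθφ
  rcases Nat.eq_zero_or_pos n with rfl | hn
  · obtain ⟨hu1, hl1⟩ := dim_zero_case θ hθ F
    obtain ⟨hu2, hl2⟩ := dim_zero_case φ hφ0 F
    rw [hu1, hl1, hu2, hl2]
    norm_num
  obtain ⟨C, hC, hcov⟩ := euclid_cover n
  -- upper bounds by n + η
  have hbigU : ∀ τ : ℝ, 0 < τ → τ ≤ 1 → ∀ η : ℝ, 0 < η → ((n : ℝ) + η) ∈ upSet τ F :=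
    fun τ hτ hτ1 η hη => big_mem_upSet hn hC hcov hτ hτ1 hF hη
  have hbigL : ∀ τ : ℝ, 0 < τ → τ ≤ 1 → ∀ η : ℝ, 0 < η → ((n : ℝ) + η) ∈ lowSet τ F :=
    fun τ hτ hτ1 η hη => upSet_subset_lowSet (hbigU τ hτ hτ1 η hη)
  constructor
  · -- upper intermediate dimensions
    set d := upperInterDim θ F with hd
    have hdn : d ≤ n := by
      apply _root_.le_of_forall_pos_le_add
      intro η hη
      exact csInf_le upSet_nonneg_mem (hbigU θ hθ hθ1 η hη)
    have hdφn : upperInterDim φ F ≤ n := by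
      apply _root_.le_of_forall_pos_le_add
      intro η hη
      exact csInf_le upSet_nonneg_mem (hbigU φ hφ0 hφ η hη)
    have hne : (upSet θ F).Nonempty := ⟨(n : ℝ) + 1, hbigU θ hθ hθ1 1 one_pos⟩
    apply _root_.le_of_forall_pos_le_add
    intro η hη
    by_cases hdlt : d < n
    · set s : ℝ := min (d + η) n with hs
      have hds : d < s := lt_min (by linarith) hdlt
      have hsn : s ≤ n := min_le_right _ _
      obtain ⟨s₁, hs₁mem, hs₁lt⟩ := (csInf_lt_iff upSet_nonneg_mem hne).1 hds
      have hsmem : s ∈ upSet θ F := upSet_mono hs₁lt.le hs₁mem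
      have hkey := transfer_upSet hn hC hcov hθ hθφ hφ hsmem hsn
      have h5 : upperInterDim φ F ≤ θ / φ * s + (1 - θ / φ) * n :=
        csInf_le upSet_nonneg_mem hkey
      have h6 : s ≤ d + η := min_le_left _ _
      nlinarith
    · have hdeq : d = n := le_antisymm hdn (not_lt.1 hdlt)
      rw [hdeq]
      ring_nf
      nlinarith
  · -- lower intermediate dimensions
    set d := lowerInterDim θ F with hd
    have hdn : d ≤ n := by
      apply _root_.le_of_forall_pos_le_add
      intro η hη
      exact csInf_le lowSet_nonneg_mem (hbigL θ hθ hθ1 η hη)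
    have hdφn : lowerInterDim φ F ≤ n := by
      apply _root_.le_of_forall_pos_le_add
      intro η hη
      exact csInf_le lowSet_nonneg_mem (hbigL φ hφ0 hφ η hη)
    have hne : (lowSet θ F).Nonempty := ⟨(n : ℝ) + 1, hbigL θ hθ hθ1 1 one_pos⟩
    apply _root_.le_of_forall_pos_le_add
    intro η hη
    by_cases hdlt : d < n
    · set s : ℝ := min (d + η) n with hs
      have hds : d < s := lt_min (by linarith) hdlt
      have hsn : s ≤ n := min_le_right _ _
      obtain ⟨s₁, hs₁mem, hs₁lt⟩ := (csInf_lt_iff lowSet_nonneg_mem hne).1 hds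
      have hsmem : s ∈ lowSet θ F := lowSet_mono hs₁lt.le hs₁mem
      have hkey := transfer_lowSet hn hC hcov hθ hθφ hφ hsmem hsn
      have h5 : lowerInterDim φ F ≤ θ / φ * s + (1 - θ / φ) * n :=
        csInf_le lowSet_nonneg_mem hkey
      have h6 : s ≤ d + η := min_le_left _ _
      nlinarith
    · have hdeq : d = n := le_antisymm hdn (not_lt.1 hdlt)
      rw [hdeq]
      ring_nf
      nlinarith
end

section
/- Let F ⊆ ℝⁿ be bounded with Assouad dimension dim_A F and lower box dimension dim_B F > 0, and let θ ∈ (0,1]. Then the lower θ-intermediate dimension of F is at least θ·(dim_A F)·(dim_B F) / (dim_A F − (1−θ)·dim_B F). -/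
open Set Metric MeasureTheory ENNReal

/-- The Assouad dimension of a set `F` in a metric space. -/
noncomputable def assouadDim {X : Type*} [PseudoMetricSpace X] (F : Set X) : ℝ :=
  sInf {s : ℝ | 0 ≤ s ∧ ∃ C > 0, ∀ x ∈ F, ∀ r R : ℝ, 0 < r → r < R →
    ∃ (N : ℕ) (U : Fin N → Set X),
      (F ∩ Metric.closedBall x R ⊆ ⋃ i, U i) ∧
      (∀ i, EMetric.diam (U i) ≤ ENNReal.ofReal r) ∧
      (N : ℝ) ≤ C * (R / r) ^ s}

/-! ### Auxiliary definitions mirroring the defining sets -/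

/-- The set of exponents in the definition of `lowerInterDim`. -/
def interSet {X : Type*} [PseudoMetricSpace X] (θ : ℝ) (F : Set X) : Set ℝ :=
  {s : ℝ | 0 ≤ s ∧ ∀ ε > 0, ∀ δ₀ > 0, ∃ δ, 0 < δ ∧ δ ≤ δ₀ ∧ interCoverSum θ δ s ε F}

/-- The set of exponents in the definition of `assouadDim`. -/
def assouadSet {X : Type*} [PseudoMetricSpace X] (F : Set X) : Set ℝ :=
  {s : ℝ | 0 ≤ s ∧ ∃ C > 0, ∀ x ∈ F, ∀ r R : ℝ, 0 < r → r < R →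
    ∃ (N : ℕ) (U : Fin N → Set X),
      (F ∩ Metric.closedBall x R ⊆ ⋃ i, U i) ∧
      (∀ i, EMetric.diam (U i) ≤ ENNReal.ofReal r) ∧
      (N : ℝ) ≤ C * (R / r) ^ s}

lemma lowerInterDim_eq_sInf {X : Type*} [PseudoMetricSpace X] (θ : ℝ) (F : Set X) :
    lowerInterDim θ F = sInf (interSet θ F) := rfl

lemma assouadDim_eq_sInf {X : Type*} [PseudoMetricSpace X] (F : Set X) :
    assouadDim F = sInf (assouadSet F) := rfl

lemma interSet_bddBelow {X : Type*} [PseudoMetricSpace X] (θ : ℝ) (F : Set X) :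
    BddBelow (interSet θ F) := ⟨0, fun _ hx => hx.1⟩

lemma lowerInterDim_nonneg {X : Type*} [PseudoMetricSpace X] (θ : ℝ) (F : Set X) :
    0 ≤ lowerInterDim θ F :=
  Real.sInf_nonneg fun _ hx => hx.1

lemma assouadDim_nonneg {X : Type*} [PseudoMetricSpace X] (F : Set X) :
    0 ≤ assouadDim F :=
  Real.sInf_nonneg fun _ hx => hx.1

/-- For `b` below the lower box dimension, covers at small scales must be expensive. -/
lemma box_counting {X : Type*} [PseudoMetricSpace X] {F : Set X} {b : ℝ}
    (hb0 : 0 ≤ b) (hbB : b < lowerBoxDim F) :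
    ∃ ε₀ > (0:ℝ), ∃ ρ₀ > (0:ℝ), ∀ ρ, 0 < ρ → ρ ≤ ρ₀ → ¬ interCoverSum 1 ρ b ε₀ F := by
  have hmem : b ∉ interSet 1 F := by
    intro hmem
    exact absurd (csInf_le (interSet_bddBelow 1 F) hmem) (not_le.2 hbB)
  by_contra h
  push_neg at h
  exact hmem ⟨hb0, fun ε hε δ₀ hδ₀ => h ε hε δ₀ hδ₀⟩

section Normed

variable {E : Type*} [NormedAddCommGroup E] [NormedSpace ℝ E] [Nontrivial E]

lemma ediam_closedBall_eq {x : E} {r : ℝ} (hr : 0 ≤ r) :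
    EMetric.diam (closedBall x r) = ENNReal.ofReal (2 * r) := by
  obtain ⟨e, he⟩ := exists_norm_eq E hr
  refine le_antisymm (EMetric.diam_le fun p hp q hq => ?_) ?_
  · rw [edist_dist]
    refine ENNReal.ofReal_le_ofReal ?_
    have hp' : dist p x ≤ r := mem_closedBall.1 hp
    have hq' : dist q x ≤ r := mem_closedBall.1 hq
    calc dist p q ≤ dist p x + dist x q := dist_triangle _ _ _
      _ ≤ r + r := by rw [dist_comm x q]; exact add_le_add hp' hq'
      _ = 2 * r := by ring
  · have h1 : x + e ∈ closedBall x r := by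
      simp [mem_closedBall, dist_eq_norm, he]
    have h2 : x - e ∈ closedBall x r := by
      simp [mem_closedBall, dist_eq_norm, he]
    have h3 : dist (x + e) (x - e) = 2 * r := by
      rw [dist_eq_norm]
      have : x + e - (x - e) = (2:ℝ) • e := by
        rw [two_smul]; abel
      rw [this, norm_smul, he]
      simp
    calc ENNReal.ofReal (2 * r) = edist (x + e) (x - e) := by rw [edist_dist, h3]
      _ ≤ EMetric.diam (closedBall x r) := EMetric.edist_le_diam_of_mem h1 h2

/-- A countable cover by closed balls of radius `ρ` whose total `b`-cost is at most `ε₀`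
yields an `interCoverSum 1 (2ρ)` witness. -/
lemma interCoverSum_of_ballCover {F : Set E} {I : Type*} [Countable I]
    (c : I → E) {ρ b ε₀ : ℝ} (hρ : 0 < ρ)
    (hcov : F ⊆ ⋃ i, closedBall (c i) ρ)
    (hsum : ∑' _ : I, ENNReal.ofReal ((2 * ρ) ^ b) ≤ ENNReal.ofReal ε₀) :
    interCoverSum 1 (2 * ρ) b ε₀ F := by
  set f : I → Set E := fun i => closedBall (c i) ρ with hf
  refine ⟨Set.range f, countable_range _, ?_, ?_, ?_⟩
  · intro x hx
    rcases mem_iUnion.1 (hcov hx) with ⟨i, hi⟩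
    exact ⟨f i, ⟨i, rfl⟩, hi⟩
  · rintro U ⟨i, rfl⟩
    have hd : EMetric.diam (f i) = ENNReal.ofReal (2 * ρ) := ediam_closedBall_eq hρ.le
    refine ⟨le_of_eq hd, fun _ => ?_⟩
    rw [hd]
    apply ENNReal.ofReal_le_ofReal
    rw [one_div_one, Real.rpow_one]
  · have key : ∀ V : ↥(Set.range f),
        EMetric.diam (V : Set E) ^ b = ENNReal.ofReal ((2 * ρ) ^ b) := by
      rintro ⟨V, i, rfl⟩
      rw [show EMetric.diam (f i) = ENNReal.ofReal (2 * ρ) from ediam_closedBall_eq hρ.le,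
        ENNReal.ofReal_rpow_of_pos (by linarith)]
    calc ∑' V : ↥(Set.range f), EMetric.diam (V : Set E) ^ b
        = ∑' _ : ↥(Set.range f), ENNReal.ofReal ((2 * ρ) ^ b) := tsum_congr key
      _ ≤ ∑' _ : I, ENNReal.ofReal ((2 * ρ) ^ b) :=
          ENNReal.tsum_comp_le_tsum_of_injective (Set.rangeSplitting_injective f)
            (fun _ : I => ENNReal.ofReal ((2 * ρ) ^ b))
      _ ≤ ENNReal.ofReal ε₀ := hsum

lemma dist_le_of_ediam_le {U : Set E} {ρ : ℝ} (hρ : 0 ≤ ρ)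
    (h : EMetric.diam U ≤ ENNReal.ofReal ρ) {z w : E} (hz : z ∈ U) (hw : w ∈ U) :
    dist z w ≤ ρ := by
  have := (EMetric.edist_le_diam_of_mem hz hw).trans h
  rw [edist_dist] at this
  exact (ENNReal.ofReal_le_ofReal_iff hρ).1 this

/-- Every member of the Assouad defining set is at least the lower box dimension. -/
lemma assouad_member_ge_box {F : Set E} (hFb : Bornology.IsBounded F) (hFne : F.Nonempty)
    {a : ℝ} (ha : a ∈ assouadSet F) : lowerBoxDim F ≤ a := by
  classical
  by_contra hab
  push_neg at hab
  obtain ⟨ha0, C, hC, hAss⟩ := ha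
  set b := (a + lowerBoxDim F) / 2 with hbdef
  have hb0 : 0 ≤ b := by unfold b; linarith
  have hba : a < b := by unfold b; linarith
  have hbB : b < lowerBoxDim F := by unfold b; linarith
  obtain ⟨ε₀, hε₀, ρ₀, hρ₀, hno⟩ := box_counting hb0 hbB
  obtain ⟨x₀, hx₀⟩ := hFne
  set R := Metric.diam F + 1 with hRdef
  have hR : 0 < R := by have := Metric.diam_nonneg (s := F); unfold R; linarith
  have hsub : F ⊆ closedBall x₀ R := by
    intro y hy
    have := Metric.dist_le_diam_of_mem hFb hy hx₀
    exact mem_closedBall.2 (by unfold R; linarith)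
  set K := C * R ^ a * 2 ^ b with hKdef
  have hK : 0 < K := by
    have h1 : (0:ℝ) < R ^ a := Real.rpow_pos_of_pos hR a
    have h2 : (0:ℝ) < (2:ℝ) ^ b := Real.rpow_pos_of_pos two_pos b
    positivity
  set δstar := (ε₀ / K) ^ (1 / (b - a)) with hδstardef
  have hδstar : 0 < δstar := Real.rpow_pos_of_pos (div_pos hε₀ hK) _
  set δ := min (min (R / 2) (ρ₀ / 2)) δstar with hδdef
  have hδ0 : 0 < δ := lt_min (lt_min (by linarith) (by linarith)) hδstar
  have hδR : δ < R := lt_of_le_of_lt ((min_le_left _ _).trans (min_le_left _ _)) (by linarith)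
  have hδρ₀ : 2 * δ ≤ ρ₀ := by
    have h : δ ≤ ρ₀ / 2 := le_trans (min_le_left _ _) (min_le_right _ _)
    linarith
  obtain ⟨N, U, hUcov, hUdiam, hN⟩ := hAss x₀ hx₀ δ R hδ0 hδR
  set c : Fin N → E := fun i => if h : (U i).Nonempty then h.some else x₀ with hcdef
  have hcov : F ⊆ ⋃ i, closedBall (c i) δ := by
    intro y hy
    have hy2 : y ∈ ⋃ i, U i := hUcov ⟨hy, hsub hy⟩
    rcases mem_iUnion.1 hy2 with ⟨i, hi⟩
    refine mem_iUnion.2 ⟨i, ?_⟩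
    have hne : (U i).Nonempty := ⟨y, hi⟩
    have hc : c i = hne.some := by simp only [hcdef]; rw [dif_pos hne]
    exact mem_closedBall.2 (hc ▸ dist_le_of_ediam_le hδ0.le (hUdiam i) hi hne.some_mem)
  refine hno (2 * δ) (by linarith) hδρ₀ (interCoverSum_of_ballCover c hδ0 hcov ?_)
  have hconst : ∑' _ : Fin N, ENNReal.ofReal ((2 * δ) ^ b)
      = (N : ℝ≥0∞) * ENNReal.ofReal ((2 * δ) ^ b) := by
    rw [tsum_fintype]
    simp [Finset.sum_const, nsmul_eq_mul]
  rw [hconst, ← ENNReal.ofReal_natCast, ← ENNReal.ofReal_mul (Nat.cast_nonneg _)]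
  apply ENNReal.ofReal_le_ofReal
  have h2δ : (0:ℝ) ≤ 2 * δ := by linarith
  have hpow : (0:ℝ) ≤ (2 * δ) ^ b := Real.rpow_nonneg h2δ b
  calc (N : ℝ) * (2 * δ) ^ b ≤ (C * (R / δ) ^ a) * ((2 * δ) ^ b) := by
        apply mul_le_mul_of_nonneg_right hN hpow
    _ = K * δ ^ (b - a) := by
        rw [Real.div_rpow hR.le hδ0.le, Real.mul_rpow (by norm_num) hδ0.le,
          Real.rpow_sub hδ0]
        unfold K
        field_simp
    _ ≤ K * δstar ^ (b - a) := by
        apply mul_le_mul_of_nonneg_left _ hK.le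
        apply Real.rpow_le_rpow hδ0.le ((min_le_right _ _) : δ ≤ δstar) (by linarith)
    _ = ε₀ := by
        unfold δstar
        rw [← Real.rpow_mul (div_pos hε₀ hK).le, one_div_mul_cancel (by linarith : b - a ≠ 0),
          Real.rpow_one]
        field_simp
  done


/-- The key counting estimate: a member `s` of the intermediate-dimension set, an Assouad
exponent `a`, a box exponent `b < lowerBoxDim F`, and an interpolating exponent `m`
with `s/θ ≤ m b` and `m (a-b) ≤ a - s` lead to a contradiction. -/
lemma core_bound {F : Set E} {θ s a b C m : ℝ}
    (hθ1 : 0 < θ)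
    (hs : s ∈ interSet θ F)
    (hb0 : 0 ≤ b) (hbB : b < lowerBoxDim F)
    (hC : 0 < C)
    (hAss : ∀ x ∈ F, ∀ r R : ℝ, 0 < r → r < R →
      ∃ (N : ℕ) (U : Fin N → Set E),
        (F ∩ Metric.closedBall x R ⊆ ⋃ i, U i) ∧
        (∀ i, EMetric.diam (U i) ≤ ENNReal.ofReal r) ∧
        (N : ℝ) ≤ C * (R / r) ^ a)
    (hm0 : 0 < m) (hmθ : s / θ ≤ m * b) (hm2 : m * (a - b) ≤ a - s) (hsa : s ≤ a) :
    False := by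
  classical
  obtain ⟨hs0, hsP⟩ := hs
  obtain ⟨ε₀, hε₀, ρ₀, hρ₀, hno⟩ := box_counting hb0 hbB
  have h2b : (0:ℝ) < 2 ^ b := Real.rpow_pos_of_pos two_pos b
  set c₁ := 2 ^ b * (1 + C) with hc₁def
  have hc₁ : 0 < c₁ := mul_pos h2b (by linarith)
  set ε := ε₀ / c₁ with hεdef
  have hε : 0 < ε := div_pos hε₀ hc₁
  set δ₀ := min 1 ((ρ₀ / 2) ^ (1 / m)) with hδ₀def
  have hδ₀ : 0 < δ₀ := lt_min one_pos (Real.rpow_pos_of_pos (by linarith) _)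
  obtain ⟨δ, hδ0, hδle, 𝒰, hcount, hcov, hdiam, hsum⟩ := hsP ε hε δ₀ hδ₀
  have hδ1 : δ ≤ 1 := hδle.trans (min_le_left _ _)
  set ρ := δ ^ m with hρdef
  have hρ0 : 0 < ρ := Real.rpow_pos_of_pos hδ0 m
  have hρρ₀ : 2 * ρ ≤ ρ₀ := by
    have h1 : δ ^ m ≤ ((ρ₀ / 2) ^ (1 / m)) ^ m :=
      Real.rpow_le_rpow hδ0.le (hδle.trans (min_le_right _ _)) hm0.le
    rw [← Real.rpow_mul (by linarith : (0:ℝ) ≤ ρ₀ / 2), one_div_mul_cancel hm0.ne',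
      Real.rpow_one] at h1
    have : ρ ≤ ρ₀ / 2 := h1
    linarith
  set 𝒰' := {U : Set E | U ∈ 𝒰 ∧ (U ∩ F).Nonempty} with h𝒰'def
  have h𝒰'sub : 𝒰' ⊆ 𝒰 := fun U hU => hU.1
  have hcount' : 𝒰'.Countable := hcount.mono h𝒰'sub
  haveI : Countable ↥𝒰' := hcount'.to_subtype
  have key : ∀ U : ↥𝒰', ∃ (N : ℕ) (cc : Fin N → E),
      ((U : Set E) ∩ F ⊆ ⋃ i, closedBall (cc i) ρ) ∧
      (N : ℝ≥0∞) * ENNReal.ofReal ((2 * ρ) ^ b)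
        ≤ ENNReal.ofReal c₁ * EMetric.diam (U : Set E) ^ s := by
    rintro ⟨U, hU𝒰, hUne⟩
    simp only [Subtype.coe_mk]
    obtain ⟨hUd, hUlow⟩ := hdiam U hU𝒰
    have hUlow' := hUlow (ne_of_gt hθ1)
    have hxUU : hUne.some ∈ U := hUne.some_mem.1
    have hxUF : hUne.some ∈ F := hUne.some_mem.2
    by_cases hsmall : EMetric.diam U ≤ ENNReal.ofReal ρ
    · refine ⟨1, fun _ => hUne.some, ?_, ?_⟩
      · intro z hz
        exact mem_iUnion.2 ⟨0, mem_closedBall.2 (dist_le_of_ediam_le hρ0.le hsmall hz.1 hxUU)⟩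
      · rw [Nat.cast_one, one_mul]
        have hlow2 : ENNReal.ofReal (δ ^ (s / θ)) ≤ EMetric.diam U ^ s := by
          calc ENNReal.ofReal (δ ^ (s / θ))
              = ENNReal.ofReal ((δ ^ (1 / θ)) ^ s) := by
                rw [← Real.rpow_mul hδ0.le]
                congr 1
                congr 1
                ring
            _ = ENNReal.ofReal (δ ^ (1 / θ)) ^ s :=
                (ENNReal.ofReal_rpow_of_pos (Real.rpow_pos_of_pos hδ0 _)).symm
            _ ≤ EMetric.diam U ^ s := ENNReal.rpow_le_rpow hUlow' hs0
        calc ENNReal.ofReal ((2 * ρ) ^ b)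
            ≤ ENNReal.ofReal (c₁ * δ ^ (s / θ)) := by
              apply ENNReal.ofReal_le_ofReal
              have e1 : (2 * ρ) ^ b = 2 ^ b * δ ^ (m * b) := by
                rw [Real.mul_rpow (by norm_num) hρ0.le, hρdef, ← Real.rpow_mul hδ0.le]
              rw [e1, hc₁def]
              have e2 : δ ^ (m * b) ≤ δ ^ (s / θ) :=
                Real.rpow_le_rpow_of_exponent_ge hδ0 hδ1 hmθ
              have e4 : (0:ℝ) ≤ δ ^ (s / θ) := (Real.rpow_pos_of_pos hδ0 _).le
              have e5 : 2 ^ b * δ ^ (m * b) ≤ 2 ^ b * δ ^ (s / θ) :=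
                mul_le_mul_of_nonneg_left e2 h2b.le
              calc 2 ^ b * δ ^ (m * b) ≤ 2 ^ b * δ ^ (s / θ) := e5
                _ ≤ (2 ^ b * (1 + C)) * δ ^ (s / θ) :=
                    mul_le_mul_of_nonneg_right (by nlinarith) e4
          _ = ENNReal.ofReal c₁ * ENNReal.ofReal (δ ^ (s / θ)) := ENNReal.ofReal_mul hc₁.le
          _ ≤ ENNReal.ofReal c₁ * EMetric.diam U ^ s := mul_le_mul_right hlow2 _
    · push_neg at hsmall
      have hdne : EMetric.diam U ≠ ⊤ := ne_top_of_le_ne_top ENNReal.ofReal_ne_top hUd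
      set RU := Metric.diam U with hRUdef
      have hRUe : EMetric.diam U = ENNReal.ofReal RU := (ENNReal.ofReal_toReal hdne).symm
      have hρRU : ρ < RU := by
        have := ENNReal.toReal_strict_mono hdne hsmall
        rwa [ENNReal.toReal_ofReal hρ0.le] at this
      have hRUδ : RU ≤ δ := by
        have := ENNReal.toReal_mono ENNReal.ofReal_ne_top hUd
        rwa [ENNReal.toReal_ofReal hδ0.le] at this
      have hRU0 : 0 < RU := hρ0.trans hρRU
      obtain ⟨N, V, hVcov, hVdiam, hVN⟩ := hAss hUne.some hxUF ρ RU hρ0 hρRU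
      have hVc : ∀ i : Fin N, ∃ y : E, V i ⊆ closedBall y ρ := by
        intro i
        by_cases h : (V i).Nonempty
        · exact ⟨h.some, fun z hz =>
            mem_closedBall.2 (dist_le_of_ediam_le hρ0.le (hVdiam i) hz h.some_mem)⟩
        · rw [not_nonempty_iff_eq_empty] at h
          exact ⟨hUne.some, by simp [h]⟩
      choose cg hcg using hVc
      refine ⟨N, cg, ?_, ?_⟩
      · intro z hz
        have hzB : z ∈ F ∩ closedBall hUne.some RU := by
          refine ⟨hz.2, mem_closedBall.2 ?_⟩
          exact Metric.dist_le_diam_of_mem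
            (Metric.isBounded_iff_ediam_ne_top.2 hdne) hz.1 hxUU
        rcases mem_iUnion.1 (hVcov hzB) with ⟨i, hi⟩
        exact mem_iUnion.2 ⟨i, hcg i hi⟩
      · rw [← ENNReal.ofReal_natCast N, ← ENNReal.ofReal_mul (Nat.cast_nonneg N), hRUe,
          ENNReal.ofReal_rpow_of_pos hRU0, ← ENNReal.ofReal_mul hc₁.le]
        apply ENNReal.ofReal_le_ofReal
        have hpow2ρ : (0:ℝ) ≤ (2 * ρ) ^ b := Real.rpow_nonneg (by linarith) b
        have h1 : (N:ℝ) * (2 * ρ) ^ b ≤ (C * (RU / ρ) ^ a) * ((2 * ρ) ^ b) :=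
          mul_le_mul_of_nonneg_right hVN hpow2ρ
        have hρpow : ρ ^ (b - a) = δ ^ (m * (b - a)) := by
          rw [hρdef, ← Real.rpow_mul hδ0.le]
        have hρa : (0:ℝ) < ρ ^ a := Real.rpow_pos_of_pos hρ0 a
        have h2 : (C * (RU / ρ) ^ a) * ((2 * ρ) ^ b)
            = C * 2 ^ b * (RU ^ a * δ ^ (m * (b - a))) := by
          rw [Real.div_rpow hRU0.le hρ0.le, Real.mul_rpow (by norm_num) hρ0.le, ← hρpow,
            Real.rpow_sub hρ0]
          field_simp
        have h3 : RU ^ a * δ ^ (m * (b - a)) ≤ RU ^ s := by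
          have e1 : RU ^ a = RU ^ s * RU ^ (a - s) := by
            rw [← Real.rpow_add hRU0]
            ring_nf
          have e2 : RU ^ (a - s) ≤ δ ^ (a - s) :=
            Real.rpow_le_rpow hRU0.le hRUδ (by linarith)
          have e3 : δ ^ (a - s) * δ ^ (m * (b - a)) = δ ^ (a - s + m * (b - a)) :=
            (Real.rpow_add hδ0 _ _).symm
          have e4 : δ ^ (a - s + m * (b - a)) ≤ 1 := by
            apply Real.rpow_le_one hδ0.le hδ1
            have : m * (b - a) = -(m * (a - b)) := by ring
            linarith
          have p1 : (0:ℝ) ≤ RU ^ s := (Real.rpow_pos_of_pos hRU0 s).le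
          have p2 : (0:ℝ) ≤ δ ^ (m * (b - a)) := (Real.rpow_pos_of_pos hδ0 _).le
          calc RU ^ a * δ ^ (m * (b - a))
              = RU ^ s * (RU ^ (a - s) * δ ^ (m * (b - a))) := by rw [e1]; ring
            _ ≤ RU ^ s * (δ ^ (a - s) * δ ^ (m * (b - a))) := by
                apply mul_le_mul_of_nonneg_left (mul_le_mul_of_nonneg_right e2 p2) p1
            _ = RU ^ s * δ ^ (a - s + m * (b - a)) := by rw [e3]
            _ ≤ RU ^ s * 1 := mul_le_mul_of_nonneg_left e4 p1
            _ = RU ^ s := mul_one _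
        have p1 : (0:ℝ) ≤ RU ^ s := (Real.rpow_pos_of_pos hRU0 s).le
        calc (N:ℝ) * (2 * ρ) ^ b ≤ C * 2 ^ b * (RU ^ a * δ ^ (m * (b - a))) := by
              rw [← h2]; exact h1
          _ ≤ C * 2 ^ b * RU ^ s :=
              mul_le_mul_of_nonneg_left h3 (by positivity)
          _ ≤ c₁ * RU ^ s := by rw [hc₁def]; nlinarith
  choose NN cc hccov hcbound using key
  have hcov2 : F ⊆ ⋃ p : (Σ U : ↥𝒰', Fin (NN U)), closedBall (cc p.1 p.2) ρ := by
    intro x hx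
    obtain ⟨U, hU𝒰, hxU⟩ := hcov hx
    have hU' : U ∈ 𝒰' := ⟨hU𝒰, ⟨x, hxU, hx⟩⟩
    rcases mem_iUnion.1 (hccov ⟨U, hU'⟩ ⟨hxU, hx⟩) with ⟨i, hi⟩
    exact mem_iUnion.2 ⟨⟨⟨U, hU'⟩, i⟩, hi⟩
  refine hno (2 * ρ) (by linarith) hρρ₀
    (interCoverSum_of_ballCover (fun p : (Σ U : ↥𝒰', Fin (NN U)) => cc p.1 p.2) hρ0 hcov2 ?_)
  calc ∑' _ : (Σ U : ↥𝒰', Fin (NN U)), ENNReal.ofReal ((2 * ρ) ^ b)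
      = ∑' U : ↥𝒰', ∑' _ : Fin (NN U), ENNReal.ofReal ((2 * ρ) ^ b) := ENNReal.tsum_sigma' _
    _ = ∑' U : ↥𝒰', (NN U : ℝ≥0∞) * ENNReal.ofReal ((2 * ρ) ^ b) :=
        tsum_congr fun U => by rw [tsum_fintype]; simp [Finset.sum_const, nsmul_eq_mul]
    _ ≤ ∑' U : ↥𝒰', ENNReal.ofReal c₁ * EMetric.diam (U : Set E) ^ s :=
        ENNReal.tsum_le_tsum hcbound
    _ = ENNReal.ofReal c₁ * ∑' U : ↥𝒰', EMetric.diam (U : Set E) ^ s := ENNReal.tsum_mul_left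
    _ ≤ ENNReal.ofReal c₁ * ∑' U : ↥𝒰, EMetric.diam (U : Set E) ^ s :=
        mul_le_mul_right (ENNReal.tsum_mono_subtype (fun A : Set E => EMetric.diam A ^ s) h𝒰'sub) _
    _ ≤ ENNReal.ofReal c₁ * ENNReal.ofReal ε := mul_le_mul_right hsum _
    _ = ENNReal.ofReal ε₀ := by
        rw [← ENNReal.ofReal_mul hc₁.le]
        congr 1
        rw [hεdef]
        field_simp


end Normed

theorem stmt12 (n : ℕ) (F : Set (EuclideanSpace ℝ (Fin n)))
    (hF : Bornology.IsBounded F) (hB : 0 < lowerBoxDim F)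
    (θ : ℝ) (hθ : θ ∈ Set.Ioc (0:ℝ) 1) :
    lowerInterDim θ F ≥
      θ * assouadDim F * lowerBoxDim F / (assouadDim F - (1 - θ) * lowerBoxDim F) := by
  obtain ⟨hθ1, hθ2⟩ := hθ
  rw [ge_iff_le]
  set A := assouadDim F with hAdef
  set B := lowerBoxDim F with hBdef
  have hA0 : 0 ≤ A := assouadDim_nonneg F
  by_cases hd : A - (1 - θ) * B ≤ 0
  · have h1 : θ * A * B / (A - (1 - θ) * B) ≤ 0 :=
      div_nonpos_of_nonneg_of_nonpos (by positivity) hd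
    exact h1.trans (lowerInterDim_nonneg θ F)
  push_neg at hd
  -- basic nonemptiness facts
  have hS1ne : (interSet 1 F).Nonempty := by
    by_contra h
    rw [not_nonempty_iff_eq_empty] at h
    have : lowerBoxDim F = 0 := by
      rw [show lowerBoxDim F = sInf (interSet 1 F) from rfl, h, Real.sInf_empty]
    linarith
  have hFne : F.Nonempty := by
    by_contra hFe
    rw [not_nonempty_iff_eq_empty] at hFe
    have h0 : (0:ℝ) ∈ interSet 1 F := by
      refine ⟨le_rfl, fun ε hε δ₀ hδ₀ => ⟨δ₀, hδ₀, le_rfl, ∅, countable_empty, ?_, ?_, ?_⟩⟩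
      · rw [hFe]; exact empty_subset _
      · intro U hU; exact absurd hU (notMem_empty U)
      · simp only [tsum_empty]
        exact zero_le
    have := csInf_le (interSet_bddBelow 1 F) h0
    have : B ≤ 0 := this
    linarith
  have hnt : Nontrivial (EuclideanSpace ℝ (Fin n)) := by
    by_contra hnt
    rw [not_nontrivial_iff_subsingleton] at hnt
    obtain ⟨s₁, hs₁⟩ := hS1ne
    obtain ⟨δ, hδ0, _, 𝒰, _, hcov, hdiam, _⟩ := hs₁.2 1 one_pos 1 one_pos
    obtain ⟨x, hx⟩ := hFne
    obtain ⟨U, hU, hxU⟩ := hcov hx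
    have h1 := (hdiam U hU).2 one_ne_zero
    have h2 : EMetric.diam U = 0 :=
      EMetric.diam_subsingleton (fun a _ b _ => Subsingleton.elim a b)
    rw [h2, le_zero_iff, ENNReal.ofReal_eq_zero] at h1
    have : (0:ℝ) < δ ^ (1 / (1:ℝ)) := Real.rpow_pos_of_pos hδ0 _
    exact absurd this (not_lt.2 h1)
  haveI := hnt
  -- the θ-set is nonempty (it contains the box set)
  have hsubset : interSet 1 F ⊆ interSet θ F := by
    rintro s ⟨hs0, hs⟩
    refine ⟨hs0, fun ε hε δ₀ hδ₀ => ?_⟩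
    obtain ⟨δ, hδ0, hδle, 𝒰, hcount, hcov, hdiam, hsum⟩ :=
      hs ε hε (min δ₀ 1) (lt_min hδ₀ one_pos)
    refine ⟨δ, hδ0, hδle.trans (min_le_left _ _), 𝒰, hcount, hcov, fun U hU => ?_, hsum⟩
    obtain ⟨h1, h2⟩ := hdiam U hU
    refine ⟨h1, fun _ => le_trans ?_ (h2 one_ne_zero)⟩
    apply ENNReal.ofReal_le_ofReal
    rw [one_div_one, Real.rpow_one]
    have hδ1 : δ ≤ 1 := hδle.trans (min_le_right _ _)
    calc δ ^ (1 / θ) ≤ δ ^ (1:ℝ) :=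
          Real.rpow_le_rpow_of_exponent_ge hδ0 hδ1 (by rw [le_div_iff₀ hθ1]; linarith)
      _ = δ := Real.rpow_one δ
  have hSθne : (interSet θ F).Nonempty := hS1ne.mono hsubset
  -- the Assouad set is nonempty
  have hAne : (assouadSet F).Nonempty := by
    by_contra h
    rw [not_nonempty_iff_eq_empty] at h
    have hA : A = 0 := by
      rw [hAdef, assouadDim_eq_sInf, h, Real.sInf_empty]
    have : (0:ℝ) ≤ (1 - θ) * B := mul_nonneg (by linarith) (by linarith)
    rw [hA] at hd
    linarith
  have hA_ge : ∀ a ∈ assouadSet F, B ≤ a := fun a ha => assouad_member_ge_box hF hFne ha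
  -- main bound: every member of the θ-set is at least the target
  refine le_csInf hSθne ?_
  intro s hs
  by_contra hst
  push_neg at hst
  have hs0 : 0 ≤ s := hs.1
  -- choose a, b near A, B keeping the strict inequality
  have hcont : ContinuousAt (fun p : ℝ × ℝ => θ * p.1 * p.2 / (p.1 - (1 - θ) * p.2)) (A, B) := by
    apply ContinuousAt.div
    · fun_prop
    · fun_prop
    · exact ne_of_gt hd
  have hev : ∀ᶠ p : ℝ × ℝ in nhds (A, B),
      s < θ * p.1 * p.2 / (p.1 - (1 - θ) * p.2) := hcont.eventually (lt_mem_nhds hst)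
  rw [Metric.eventually_nhds_iff] at hev
  obtain ⟨σ, hσ, hball⟩ := hev
  obtain ⟨a, haS, haA⟩ := Real.lt_sInf_add_pos hAne (half_pos hσ)
  have haA' : A ≤ a := csInf_le ⟨0, fun x hx => hx.1⟩ haS
  have haA2 : a < A + σ / 2 := by rw [hAdef, assouadDim_eq_sInf]; exact haA
  set b := max 0 (B - σ / 2) with hbdef
  have hb0 : 0 ≤ b := le_max_left _ _
  have hbB : b < B := max_lt hB (by linarith)
  have hdist : dist ((a, b) : ℝ × ℝ) (A, B) < σ := by
    rw [Prod.dist_eq]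
    have h1 : dist a A < σ := by
      rw [Real.dist_eq, abs_lt]
      constructor
      · linarith [haA']
      · linarith [haA2]
    have h2 : dist b B < σ := by
      rw [Real.dist_eq, abs_lt]
      have : B - σ / 2 ≤ b := le_max_right _ _
      constructor <;> [linarith; linarith [hbB]]
    exact max_lt h1 h2
  have hst2 : s < θ * a * b / (a - (1 - θ) * b) := hball hdist
  obtain ⟨ha0, C, hC, hAss⟩ := haS
  have hBa : B ≤ a := hA_ge a ⟨ha0, C, hC, hAss⟩
  have hba : b < a := lt_of_lt_of_le hbB hBa
  have ha0' : 0 < a := lt_of_le_of_lt hb0 hba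
  have hda : 0 < a - (1 - θ) * b := by nlinarith
  have hb0' : 0 < b := by
    rcases lt_or_eq_of_le hb0 with h | h
    · exact h
    · exfalso
      rw [← h] at hst2
      simp only [mul_zero, zero_div] at hst2
      linarith
  have hnum : s * (a - (1 - θ) * b) < θ * a * b := (lt_div_iff₀ hda).1 hst2
  have hsb : s < b := by
    nlinarith [mul_nonneg (mul_nonneg hb0 (by linarith : (0:ℝ) ≤ 1 - θ))
      (by linarith : (0:ℝ) ≤ a - b), hda, hb0', hθ1]
  -- choose the interpolation exponent m
  set m := (a - s) / (a - b) with hmdef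
  have hab : 0 < a - b := by linarith
  have hm0 : 0 < m := div_pos (by linarith) hab
  have hm2 : m * (a - b) ≤ a - s := by
    rw [hmdef, div_mul_cancel₀ _ (ne_of_gt hab)]
  have hmθ : s / θ ≤ m * b := by
    rw [div_le_iff₀ hθ1, hmdef, div_mul_eq_mul_div, div_mul_eq_mul_div, le_div_iff₀ hab]
    nlinarith
  exact core_bound hθ1 hs hb0 hbB hC hAss hm0 hmθ hm2 (by linarith)
end
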